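/- arXiv:2007.08490 — 5 statements merged into one kernel-verified Lean document; each statement's English description precedes it below -/
import Mathlib

section
/- For all n ≥ 4, f(n) = f(n−1) + 2·f^0(n) + 2·f^1(n) − f^{0,0}(n) − 2·f^{0,1}(n) − f^{1,1}(n). -/
/-- The adjacent transposition swapping (0-indexed) positions `k` and `k+1` in `Fin n`;
the identity if `k+1 ≥ n`. -/
def adjTransposition (n : ℕ) (k : ℕ) : Equiv.Perm (Fin n) :=
  if h : k + 1 < n then Equiv.swap ⟨k, Nat.lt_of_succ_lt h⟩ ⟨k + 1, h⟩ else 1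

/-- `l` is a word for the permutation `w` of `Fin n`. -/
def IsWord (n : ℕ) (w : Equiv.Perm (Fin n)) (l : List ℕ) : Prop :=
  (∀ k ∈ l, k + 1 < n) ∧ w = (l.map (adjTransposition n)).prod

/-- `l` is a reduced word for `w`. -/
def IsReducedWord (n : ℕ) (w : Equiv.Perm (Fin n)) (l : List ℕ) : Prop :=
  IsWord n w l ∧ ∀ l', IsWord n w l' → l.length ≤ l'.length

/-- `w` is `k`-boolean: every letter appears at most `k` times in every reduced word. -/
def IsKBoolean (k n : ℕ) (w : Equiv.Perm (Fin n)) : Prop :=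
  ∀ l, IsReducedWord n w l → ∀ i, l.count i ≤ k

/-- `w` contains the pattern whose one-line notation is the list `p`. -/
def ContainsPattern {n : ℕ} (w : Equiv.Perm (Fin n)) (p : List ℕ) : Prop :=
  ∃ f : Fin p.length → Fin n, StrictMono f ∧
    ∀ a b : Fin p.length, w (f a) < w (f b) ↔ p.get a < p.get b

/-- `f n` is the number of 2-boolean permutations of `Fin n`. -/
noncomputable def numTwoBoolean (n : ℕ) : ℕ :=
  Nat.card {w : Equiv.Perm (Fin n) // IsKBoolean 2 n w}

/-- `w(1) ≠ 1` in 1-indexed notation. -/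
def MovesZero : {n : ℕ} → Equiv.Perm (Fin n) → Prop
  | 0, _ => False
  | _ + 1, w => w 0 ≠ 0

/-- the statistic `a(w)`. -/
noncomputable def aStat : {n : ℕ} → Equiv.Perm (Fin n) → ℕ
  | 0, _ => 0
  | _ + 1, w => Nat.card {i // 0 < i ∧ i < w⁻¹ 0 ∧ w 0 < w i}

/-- the statistic `b(w)`. -/
noncomputable def bStat : {n : ℕ} → Equiv.Perm (Fin n) → ℕ
  | 0, _ => 0
  | _ + 1, w => Nat.card {i // w⁻¹ 0 < i ∧ 0 < w i ∧ w i < w 0}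

/-- the statistic `c(w)`. -/
noncomputable def cStat : {n : ℕ} → Equiv.Perm (Fin n) → ℕ
  | 0, _ => 0
  | _ + 1, w => Nat.card {i // 0 < i ∧ i < w⁻¹ 0 ∧ 0 < w i ∧ w i < w 0}

/-- number of inversions (Coxeter length). -/
noncomputable def invCount {n : ℕ} (w : Equiv.Perm (Fin n)) : ℕ :=
  Nat.card {p : Fin n × Fin n // p.1 < p.2 ∧ w p.2 < w p.1}

noncomputable def fA (n a : ℕ) : ℕ :=
  Nat.card {w : Equiv.Perm (Fin n) // IsKBoolean 2 n w ∧ MovesZero w ∧ aStat w = a}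

noncomputable def fAB (n a b : ℕ) : ℕ :=
  Nat.card {w : Equiv.Perm (Fin n) //
    IsKBoolean 2 n w ∧ MovesZero w ∧ aStat w = a ∧ bStat w = b}

open Finset Equiv

variable {n : ℕ}

lemma adjT_of_lt {k : ℕ} (h : k + 1 < n) :
    adjTransposition n k = Equiv.swap ⟨k, Nat.lt_of_succ_lt h⟩ ⟨k + 1, h⟩ := dif_pos h

lemma adjT_mul_self (n k : ℕ) : adjTransposition n k * adjTransposition n k = 1 := by
  unfold adjTransposition
  split
  · exact Equiv.swap_mul_self _ _
  · simp

/-- inversion set -/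
def invSet (w : Equiv.Perm (Fin n)) : Finset (Fin n × Fin n) :=
  univ.filter (fun p => p.1 < p.2 ∧ w p.2 < w p.1)

def invF (w : Equiv.Perm (Fin n)) : ℕ := (invSet w).card

lemma mem_invSet {w : Equiv.Perm (Fin n)} {p : Fin n × Fin n} :
    p ∈ invSet w ↔ p.1 < p.2 ∧ w p.2 < w p.1 := by
  simp [invSet]

lemma invSet_one : invSet (1 : Equiv.Perm (Fin n)) = ∅ := by
  ext p
  simp only [mem_invSet, Finset.notMem_empty, iff_false]
  rintro ⟨h1, h2⟩
  simp only [Equiv.Perm.one_apply] at h2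
  exact absurd h1 (not_lt.2 h2.le)

lemma invF_one : invF (1 : Equiv.Perm (Fin n)) = 0 := by
  simp [invF, invSet_one]

lemma fin_ne_val {x y : Fin n} (h : x ≠ y) : (x : ℕ) ≠ (y : ℕ) :=
  fun h' => h (Fin.ext h')

lemma swap_lt_iff {a b x y : Fin n} (hab : (b : ℕ) = (a : ℕ) + 1) (hxy : x ≠ y) :
    Equiv.swap a b x < Equiv.swap a b y ↔
      ((x < y ∧ ¬(x = a ∧ y = b)) ∨ (x = b ∧ y = a)) := by
  have hxy' := fin_ne_val hxy
  rcases eq_or_ne x a with hxa | hxa <;> rcases eq_or_ne x b with hxb | hxb <;>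
    rcases eq_or_ne y a with hya | hya <;> rcases eq_or_ne y b with hyb | hyb <;>
  first
  | (exact absurd (hxa ▸ hxb : a = b) (by intro h; rw [h] at hab; omega))
  | (exact absurd (hya ▸ hyb : a = b) (by intro h; rw [h] at hab; omega))
  | (exact absurd (hxa ▸ hya ▸ rfl : x = y) hxy)
  | (exact absurd (hxb ▸ hyb ▸ rfl : x = y) hxy)
  | · first
      | rw [hxa, Equiv.swap_apply_left]
      | rw [hxb, Equiv.swap_apply_right]
      | rw [Equiv.swap_apply_of_ne_of_ne hxa hxb]
      first
      | rw [hya, Equiv.swap_apply_left]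
      | rw [hyb, Equiv.swap_apply_right]
      | rw [Equiv.swap_apply_of_ne_of_ne hya hyb]
      simp only [Fin.lt_def, Fin.ext_iff, true_and, and_true, not_true_eq_false,
        and_false, false_and, or_false, false_or, or_true, true_or, iff_true, true_iff] at *
      omega

lemma mem_invSet_swap_mul {a b : Fin n} (hab : (b : ℕ) = (a : ℕ) + 1)
    (w : Equiv.Perm (Fin n)) (p : Fin n × Fin n) :
    p ∈ invSet (Equiv.swap a b * w) ↔
      p.1 < p.2 ∧ ((w p.2 < w p.1 ∧ ¬(w p.2 = a ∧ w p.1 = b)) ∨ (w p.2 = b ∧ w p.1 = a)) := by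
  rw [mem_invSet]
  refine and_congr_right fun h12 => ?_
  have hne : w p.2 ≠ w p.1 := fun h => absurd (w.injective h) (ne_of_gt h12)
  simpa using swap_lt_iff hab hne

lemma invF_swap_mul_of_lt {a b : Fin n} (hab : (b : ℕ) = (a : ℕ) + 1)
    (w : Equiv.Perm (Fin n)) (h : w⁻¹ a < w⁻¹ b) :
    invF (Equiv.swap a b * w) = invF w + 1 := by
  have hq : (w⁻¹ a, w⁻¹ b) ∉ invSet w := by
    rw [mem_invSet]
    rintro ⟨-, hlt⟩
    simp only [Equiv.Perm.coe_inv, Equiv.apply_symm_apply] at hlt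
    exact absurd hlt (by simp only [Fin.lt_def, not_lt]; omega)
  have hset : invSet (Equiv.swap a b * w) = insert (w⁻¹ a, w⁻¹ b) (invSet w) := by
    ext ⟨i, j⟩
    rw [mem_invSet_swap_mul hab, Finset.mem_insert, mem_invSet, Prod.mk.injEq]
    constructor
    · rintro ⟨hij, (⟨hlt, -⟩ | ⟨h2, h1⟩)⟩
      · exact Or.inr ⟨hij, hlt⟩
      · left
        rw [← h1, ← h2]
        simp
    · rintro (⟨rfl, rfl⟩ | ⟨hij, hlt⟩)
      · exact ⟨h, Or.inr (by simp)⟩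
      · refine ⟨hij, Or.inl ⟨hlt, ?_⟩⟩
        rintro ⟨ha, hb⟩
        have hja : j = w⁻¹ a := by rw [← ha]; simp
        have hib : i = w⁻¹ b := by rw [← hb]; simp
        rw [hja, hib] at hij
        exact absurd (hij.trans h) (lt_irrefl _)
  rw [invF, invF, hset, Finset.card_insert_of_notMem hq]

lemma invF_swap_mul_of_gt {a b : Fin n} (hab : (b : ℕ) = (a : ℕ) + 1)
    (w : Equiv.Perm (Fin n)) (h : w⁻¹ b < w⁻¹ a) :
    invF (Equiv.swap a b * w) + 1 = invF w := by
  have hq : (w⁻¹ b, w⁻¹ a) ∈ invSet w := by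
    rw [mem_invSet]
    refine ⟨h, ?_⟩
    simp only [Equiv.Perm.coe_inv, Equiv.apply_symm_apply]
    simp only [Fin.lt_def]; omega
  have hset : invSet (Equiv.swap a b * w) = (invSet w).erase (w⁻¹ b, w⁻¹ a) := by
    ext ⟨i, j⟩
    rw [mem_invSet_swap_mul hab, Finset.mem_erase, mem_invSet]
    constructor
    · rintro ⟨hij, (⟨hlt, hne⟩ | ⟨h2, h1⟩)⟩
      · refine ⟨?_, hij, hlt⟩
        intro heq
        simp only [Prod.mk.injEq] at heq
        obtain ⟨rfl, rfl⟩ := heq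
        exact hne ⟨by simp, by simp⟩
      · exfalso
        have hja : j = w⁻¹ b := by rw [← h2]; simp
        have hib : i = w⁻¹ a := by rw [← h1]; simp
        rw [hja, hib] at hij
        exact absurd (hij.trans h) (lt_irrefl _)
    · rintro ⟨hne, hij, hlt⟩
      refine ⟨hij, Or.inl ⟨hlt, ?_⟩⟩
      rintro ⟨ha, hb⟩
      have hja : j = w⁻¹ a := by rw [← ha]; simp
      have hib : i = w⁻¹ b := by rw [← hb]; simp
      exact hne (by rw [hja, hib])
  rw [invF, invF, hset, Finset.card_erase_of_mem hq]
  have : 0 < (invSet w).card := Finset.card_pos.2 ⟨_, hq⟩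
  omega

lemma invF_inv (w : Equiv.Perm (Fin n)) : invF w⁻¹ = invF w := by
  unfold invF
  apply Finset.card_bij' (fun p _ => (w⁻¹ p.2, w⁻¹ p.1)) (fun p _ => (w p.2, w p.1))
  · rintro ⟨i, j⟩ hm
    rw [mem_invSet] at hm ⊢
    exact ⟨by simpa using hm.2, by simpa using hm.1⟩
  · rintro ⟨i, j⟩ hm
    rw [mem_invSet] at hm ⊢
    exact ⟨by simpa using hm.2, by simpa using hm.1⟩
  · rintro ⟨i, j⟩ _; simp
  · rintro ⟨i, j⟩ _; simp

lemma invF_adjT_mul_le (k : ℕ) (w : Equiv.Perm (Fin n)) :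
    invF (adjTransposition n k * w) ≤ invF w + 1 := by
  by_cases h : k + 1 < n
  · rw [adjT_of_lt h]
    set a : Fin n := ⟨k, Nat.lt_of_succ_lt h⟩
    set b : Fin n := ⟨k + 1, h⟩
    have hab : (b : ℕ) = (a : ℕ) + 1 := rfl
    rcases lt_or_gt_of_ne (show w⁻¹ a ≠ w⁻¹ b by
      intro he
      have := (w⁻¹).injective he
      simp only [a, b, Fin.mk.injEq] at this
      omega) with h' | h'
    · rw [invF_swap_mul_of_lt hab w h']
    · have := invF_swap_mul_of_gt hab w h'
      omega
  · rw [adjTransposition, dif_neg h, one_mul]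
    omega

lemma isWord_length_ge {w : Equiv.Perm (Fin n)} {l : List ℕ} (hw : IsWord n w l) :
    invF w ≤ l.length := by
  induction l generalizing w with
  | nil =>
    obtain ⟨-, hp⟩ := hw
    simp only [List.map_nil, List.prod_nil] at hp
    simp [hp, invF_one]
  | cons j t ih =>
    obtain ⟨hmem, hp⟩ := hw
    simp only [List.map_cons, List.prod_cons] at hp
    have ht : IsWord n ((t.map (adjTransposition n)).prod) t :=
      ⟨fun k hk => hmem k (List.mem_cons_of_mem _ hk), rfl⟩
    have := ih ht
    have h2 := invF_adjT_mul_le j ((t.map (adjTransposition n)).prod)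
    rw [hp]
    simp only [List.length_cons]
    omega

lemma strictMono_eq_one {w : Equiv.Perm (Fin n)} (h : StrictMono w) : w = 1 := by
  have hmono : ∀ i j : Fin n, i ≤ j → w i ≤ w j := fun i j hij => h.le_iff_le.2 hij
  have hinv : StrictMono (w⁻¹ : Equiv.Perm (Fin n)) := by
    intro i j hij
    rcases lt_trichotomy (w⁻¹ i) (w⁻¹ j) with h' | h' | h'
    · exact h'
    · have hij' : i = j := by have := congrArg w h'; simpa using this
      exact absurd hij' (ne_of_lt hij)
    · have := h h'
      simp only [Equiv.Perm.coe_inv, Equiv.apply_symm_apply] at this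
      exact absurd hij (not_lt.2 this.le)
  have key : ∀ (f : Equiv.Perm (Fin n)), StrictMono f → ∀ i : Fin n, i ≤ f i := by
    intro f hf i
    obtain ⟨iv, hiv⟩ := i
    induction iv with
    | zero => simp [Fin.le_def]
    | succ m ihm =>
      have hm : (⟨m, Nat.lt_of_succ_lt hiv⟩ : Fin n) ≤ f ⟨m, Nat.lt_of_succ_lt hiv⟩ :=
        ihm (Nat.lt_of_succ_lt hiv)
      have hlt : f ⟨m, Nat.lt_of_succ_lt hiv⟩ < f ⟨m + 1, hiv⟩ := by
        apply hf
        simp [Fin.lt_def]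
      have := hm.trans_lt hlt
      simp only [Fin.le_def, Fin.lt_def] at *
      omega
  ext i
  have h1 : i ≤ w i := key w h i
  have h2 : i ≤ w⁻¹ i := key _ hinv i
  have h3 : w i ≤ w (w⁻¹ i) := hmono _ _ h2
  simp only [Equiv.Perm.coe_inv, Equiv.apply_symm_apply] at h3
  have : w i = i := le_antisymm h3 h1
  simp [this]

lemma exists_descent {w : Equiv.Perm (Fin n)} (hw : w ≠ 1) :
    ∃ k : ℕ, ∃ h : k + 1 < n, w ⟨k + 1, h⟩ < w ⟨k, Nat.lt_of_succ_lt h⟩ := by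
  by_contra hc
  push_neg at hc
  apply hw
  apply strictMono_eq_one
  have hadj : ∀ (k : ℕ) (h : k + 1 < n), w ⟨k, Nat.lt_of_succ_lt h⟩ < w ⟨k + 1, h⟩ := by
    intro k h
    rcases lt_or_eq_of_le (hc k h) with h' | h'
    · exact h'
    · exfalso
      have := w.injective h'
      simp only [Fin.mk.injEq] at this
      omega
  intro i j hij
  obtain ⟨jv, hjv⟩ := j
  induction jv with
  | zero => exact absurd hij (by simp [Fin.lt_def])
  | succ m ihm =>
    have hm1 : m + 1 < n := hjv
    have hm : m < n := Nat.lt_of_succ_lt hjv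
    rcases lt_or_eq_of_le (show (i : ℕ) ≤ m by
        have := hij; simp only [Fin.lt_def] at this; omega) with h' | h'
    · exact (ihm hm (by simp [Fin.lt_def, h'])).trans (hadj m hjv)
    · have : i = ⟨m, hm⟩ := Fin.ext h'
      rw [this]
      exact hadj m hjv

lemma adjT_inv (n k : ℕ) : (adjTransposition n k)⁻¹ = adjTransposition n k :=
  inv_eq_of_mul_eq_one_left (adjT_mul_self n k)

lemma invF_mul_adjT_of_descent {k : ℕ} (h : k + 1 < n) (w : Equiv.Perm (Fin n))
    (hd : w ⟨k + 1, h⟩ < w ⟨k, Nat.lt_of_succ_lt h⟩) :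
    invF (w * adjTransposition n k) + 1 = invF w := by
  rw [adjT_of_lt h]
  set a : Fin n := ⟨k, Nat.lt_of_succ_lt h⟩
  set b : Fin n := ⟨k + 1, h⟩
  have hab : (b : ℕ) = (a : ℕ) + 1 := rfl
  have h1 : w * Equiv.swap a b = (Equiv.swap a b * w⁻¹)⁻¹ := by
    rw [mul_inv_rev, inv_inv]
    try rw [Equiv.swap_inv]
  rw [h1, invF_inv]
  have := invF_swap_mul_of_gt hab w⁻¹ (by simpa using hd)
  rw [invF_inv] at this
  exact this

lemma exists_word_invF (w : Equiv.Perm (Fin n)) :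
    ∃ l, IsWord n w l ∧ l.length = invF w := by
  generalize hN : invF w = N
  induction N using Nat.strong_induction_on generalizing w with
  | _ N ih =>
    rcases eq_or_ne w 1 with rfl | hw
    · exact ⟨[], ⟨by simp, by simp⟩, by simp [← hN, invF_one]⟩
    · obtain ⟨k, hk, hd⟩ := exists_descent hw
      have hdec := invF_mul_adjT_of_descent hk w hd
      obtain ⟨l', hw', hl'⟩ := ih (invF (w * adjTransposition n k)) (by omega) _ rfl
      refine ⟨l' ++ [k], ⟨?_, ?_⟩, ?_⟩
      · intro x hx
        rcases List.mem_append.1 hx with hx | hx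
        · exact hw'.1 x hx
        · simp only [List.mem_singleton] at hx
          omega
      · rw [List.map_append, List.prod_append, ← hw'.2]
        simp only [List.map_cons, List.map_nil, List.prod_cons, List.prod_nil, mul_one]
        rw [mul_assoc, adjT_mul_self, mul_one]
      · rw [List.length_append, hl']
        simp only [List.length_singleton]
        omega

lemma isReducedWord_iff {w : Equiv.Perm (Fin n)} {l : List ℕ} :
    IsReducedWord n w l ↔ IsWord n w l ∧ l.length = invF w := by
  constructor
  · rintro ⟨hw, hmin⟩
    obtain ⟨l0, hl0, hlen0⟩ := exists_word_invF w
    exact ⟨hw, le_antisymm (hlen0 ▸ hmin l0 hl0) (isWord_length_ge hw)⟩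
  · rintro ⟨hw, hlen⟩
    exact ⟨hw, fun l' hl' => hlen ▸ isWord_length_ge hl'⟩

lemma exists_reduced (w : Equiv.Perm (Fin n)) : ∃ l, IsReducedWord n w l := by
  obtain ⟨l, hl, hlen⟩ := exists_word_invF w
  exact ⟨l, isReducedWord_iff.2 ⟨hl, hlen⟩⟩

lemma prod_map_reverse (l : List ℕ) :
    ((l.reverse).map (adjTransposition n)).prod = ((l.map (adjTransposition n)).prod)⁻¹ := by
  induction l with
  | nil => simp
  | cons j t ih =>
    simp only [List.reverse_cons, List.map_append, List.prod_append, List.map_cons,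
      List.prod_cons, List.map_nil, List.prod_nil, mul_one, ih, mul_inv_rev]
    try rw [adjT_inv]

lemma isWord_reverse {w : Equiv.Perm (Fin n)} {l : List ℕ} (hw : IsWord n w l) :
    IsWord n w⁻¹ l.reverse := by
  refine ⟨fun k hk => hw.1 k (List.mem_reverse.1 hk), ?_⟩
  rw [prod_map_reverse, ← hw.2]

lemma isReducedWord_reverse {w : Equiv.Perm (Fin n)} {l : List ℕ}
    (hw : IsReducedWord n w l) : IsReducedWord n w⁻¹ l.reverse := by
  rw [isReducedWord_iff] at hw ⊢
  exact ⟨isWord_reverse hw.1, by rw [List.length_reverse, invF_inv]; exact hw.2⟩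

lemma isKBoolean_inv {k : ℕ} {w : Equiv.Perm (Fin n)} (h : IsKBoolean k n w) :
    IsKBoolean k n w⁻¹ := by
  intro l hl i
  have := h l.reverse (by simpa using isReducedWord_reverse hl) i
  simpa [List.count_reverse] using this

lemma zero_notin_reduced {m : ℕ} {w : Equiv.Perm (Fin (m + 1))} (h0 : w 0 = 0)
    {l : List ℕ} (hred : IsReducedWord (m + 1) w l) : 0 ∉ l := by
  induction l generalizing w with
  | nil => simp
  | cons j t ih =>
    have hlen := (isReducedWord_iff.1 hred).2
    obtain ⟨⟨hmem, hp⟩, -⟩ := hred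
    have hj1 : j + 1 < m + 1 := hmem j (List.mem_cons_self)
    simp only [List.map_cons, List.prod_cons] at hp
    have htw : IsWord (m + 1) (adjTransposition (m + 1) j * w) t := by
      refine ⟨fun x hx => hmem x (List.mem_cons_of_mem _ hx), ?_⟩
      rw [hp, ← mul_assoc, adjT_mul_self, one_mul]
    set a : Fin (m + 1) := ⟨j, Nat.lt_of_succ_lt hj1⟩
    set b : Fin (m + 1) := ⟨j + 1, hj1⟩
    have hab : (b : ℕ) = (a : ℕ) + 1 := rfl
    have hineq : invF (adjTransposition (m + 1) j * w) ≤ invF w - 1 := by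
      have := isWord_length_ge htw
      simp only [List.length_cons] at hlen
      omega
    have hne : w⁻¹ a ≠ w⁻¹ b := by
      intro he
      have := (w⁻¹).injective he
      simp only [a, b, Fin.mk.injEq] at this
      omega
    have hgt : w⁻¹ b < w⁻¹ a := by
      rcases lt_or_gt_of_ne hne with h' | h'
      · exfalso
        have := invF_swap_mul_of_lt hab w h'
        rw [← adjT_of_lt hj1] at this
        have hpos : 0 < invF w := by omega
        omega
      · exact h'
    have hjne : j ≠ 0 := by
      intro hj0
      subst hj0
      have ha0 : a = 0 := rfl
      have hinv0 : w⁻¹ a = 0 := by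
        rw [ha0]
        exact Equiv.Perm.inv_eq_iff_eq.2 h0.symm
      rw [hinv0] at hgt
      exact absurd hgt (by simp [Fin.lt_def])
    have hdec := invF_swap_mul_of_gt hab w hgt
    rw [← adjT_of_lt hj1] at hdec
    have htred : IsReducedWord (m + 1) (adjTransposition (m + 1) j * w) t := by
      rw [isReducedWord_iff]
      refine ⟨htw, ?_⟩
      simp only [List.length_cons] at hlen
      omega
    have h0' : (adjTransposition (m + 1) j * w) 0 = 0 := by
      rw [Equiv.Perm.mul_apply, h0, adjT_of_lt hj1]
      apply Equiv.swap_apply_of_ne_of_ne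
      · intro he
        have := congrArg Fin.val he
        simp only [Fin.val_zero] at this
        exact hjne this.symm
      · intro he
        have : (0 : ℕ) = j + 1 := congrArg Fin.val he
        omega
    have := ih h0' htred
    simp only [List.mem_cons]
    rintro (h' | h')
    · exact hjne h'.symm
    · exact this h'

lemma count_letter_ge {w : Equiv.Perm (Fin n)} {l : List ℕ} (hw : IsWord n w l)
    (t : Fin n) :
    (univ.filter (fun i : Fin n => i ≤ t ∧ t < w i)).card ≤ l.count (t : ℕ) := by
  induction l generalizing w with
  | nil =>
    obtain ⟨-, hp⟩ := hw
    simp only [List.map_nil, List.prod_nil] at hp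
    subst hp
    simp only [List.count_nil, Nat.le_zero, Finset.card_eq_zero]
    ext i
    rw [Finset.mem_filter]
    simp only [Finset.mem_filter, Finset.mem_univ, true_and, Finset.notMem_empty,
      iff_false, not_and, Equiv.Perm.one_apply]
    intro h1
    exact not_lt.2 h1
  | cons j s ih =>
    obtain ⟨hmem, hp⟩ := hw
    have hj1 : j + 1 < n := hmem j (List.mem_cons_self)
    simp only [List.map_cons, List.prod_cons] at hp
    set w' := ((s.map (adjTransposition n)).prod) with hw'
    have hsword : IsWord n w' s := ⟨fun x hx => hmem x (List.mem_cons_of_mem _ hx), rfl⟩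
    have ihs := ih hsword
    subst hp
    set a : Fin n := ⟨j, Nat.lt_of_succ_lt hj1⟩
    set b : Fin n := ⟨j + 1, hj1⟩
    by_cases hjt : j = (t : ℕ)
    · have hcnt : (j :: s).count (t : ℕ) = s.count (t : ℕ) + 1 := by
        simp [List.count_cons, hjt]
      rw [hcnt]
      -- card ≤ card (filter for w') + 1
      have hsub : (univ.filter (fun i : Fin n => i ≤ t ∧ t < (adjTransposition n j * w') i)) ⊆
          insert (w'⁻¹ a) (univ.filter (fun i : Fin n => i ≤ t ∧ t < w' i)) := by
        intro i hi
        rw [Finset.mem_filter] at hi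
        simp only [Finset.mem_filter, Finset.mem_univ, true_and, Equiv.Perm.mul_apply] at hi
        obtain ⟨hile, hlt⟩ := hi
        rw [Finset.mem_insert]
        by_cases h' : t < w' i
        · exact Or.inr (by simp [hile, h'])
        · left
          have hwi : w' i = a := by
            rw [adjT_of_lt hj1] at hlt
            by_cases h1 : w' i = a
            · exact h1
            by_cases h2 : w' i = b
            · exfalso
              rw [h2] at h'
              apply h'
              simp only [Fin.lt_def, b]
              have : (t : ℕ) = j := hjt.symm
              omega
            · rw [Equiv.swap_apply_of_ne_of_ne h1 h2] at hlt
              exact absurd hlt h'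
          rw [← hwi]
          simp
      calc (univ.filter (fun i : Fin n => i ≤ t ∧ t < (adjTransposition n j * w') i)).card
          ≤ (insert (w'⁻¹ a) (univ.filter (fun i : Fin n => i ≤ t ∧ t < w' i))).card :=
            Finset.card_le_card hsub
        _ ≤ (univ.filter (fun i : Fin n => i ≤ t ∧ t < w' i)).card + 1 :=
            Finset.card_insert_le _ _
        _ ≤ s.count (t : ℕ) + 1 := by omega
    · have hcnt : (j :: s).count (t : ℕ) = s.count (t : ℕ) := by
        simp [List.count_cons, hjt]
      rw [hcnt]
      have hset : (univ.filter (fun i : Fin n => i ≤ t ∧ t < (adjTransposition n j * w') i)) =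
          (univ.filter (fun i : Fin n => i ≤ t ∧ t < w' i)) := by
        apply Finset.filter_congr
        intro i _
        have key : t < (adjTransposition n j * w') i ↔ t < w' i := by
          rw [Equiv.Perm.mul_apply, adjT_of_lt hj1]
          by_cases h1 : w' i = a
          · rw [h1, Equiv.swap_apply_left]
            simp only [Fin.lt_def, a, b]
            omega
          by_cases h2 : w' i = b
          · rw [h2, Equiv.swap_apply_right]
            simp only [Fin.lt_def, a, b]
            omega
          · rw [Equiv.swap_apply_of_ne_of_ne h1 h2]
        exact and_congr_right fun _ => key
      rw [hset]
      exact ihs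

lemma natCard_eq_filter {α : Type*} [Fintype α] [DecidableEq α] (p : α → Prop)
    [DecidablePred p] :
    Nat.card {x // p x} = (univ.filter p).card := by
  rw [Nat.card_eq_fintype_card, Fintype.card_subtype]

lemma three_le_card {α : Type*} [DecidableEq α] {s : Finset α} {x0 x1 x2 : α}
    (h0 : x0 ∈ s) (h1 : x1 ∈ s) (h2 : x2 ∈ s)
    (d01 : x0 ≠ x1) (d02 : x0 ≠ x2) (d12 : x1 ≠ x2) : 3 ≤ s.card := by
  have hsub : ({x0, x1, x2} : Finset α) ⊆ s := by
    intro x hx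
    simp only [Finset.mem_insert, Finset.mem_singleton] at hx
    rcases hx with rfl | rfl | rfl <;> assumption
  have hcard : ({x0, x1, x2} : Finset α).card = 3 := by
    rw [Finset.card_insert_of_notMem (by simp [d01, d02]),
      Finset.card_insert_of_notMem (by simp [d12]), Finset.card_singleton]
  exact hcard ▸ Finset.card_le_card hsub

lemma not_a2_b2 {m : ℕ} {w : Equiv.Perm (Fin (m + 1))} (h2 : IsKBoolean 2 (m + 1) w)
    (hm : w 0 ≠ 0) : ¬(2 ≤ aStat w ∧ 2 ≤ bStat w) := by
  classical
  rintro ⟨ha, hb⟩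
  have ha' : 2 ≤ Nat.card {i : Fin (m + 1) // 0 < i ∧ i < w⁻¹ 0 ∧ w 0 < w i} := ha
  have hb' : 2 ≤ Nat.card {i : Fin (m + 1) // w⁻¹ 0 < i ∧ 0 < w i ∧ w i < w 0} := hb
  rw [natCard_eq_filter] at ha' hb'
  obtain ⟨i1, hi1, i2, hi2, hine⟩ := Finset.one_lt_card.1 (by omega : 1 < (univ.filter
    (fun i : Fin (m + 1) => 0 < i ∧ i < w⁻¹ 0 ∧ w 0 < w i)).card)
  obtain ⟨j1, hj1, j2, hj2, hjne⟩ := Finset.one_lt_card.1 (by omega : 1 < (univ.filter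
    (fun i : Fin (m + 1) => w⁻¹ 0 < i ∧ 0 < w i ∧ w i < w 0)).card)
  simp only [Finset.mem_filter, Finset.mem_univ, true_and] at hi1 hi2 hj1 hj2
  obtain ⟨hi1pos, hi1lt, hi1val⟩ := hi1
  obtain ⟨hi2pos, hi2lt, hi2val⟩ := hi2
  obtain ⟨l, hl⟩ := exists_reduced w
  rcases le_total (w⁻¹ 0) (w 0) with hpM | hMp
  · -- use t = max i1 i2, position side with w
    set t : Fin (m + 1) := max i1 i2 with ht
    have htlt : t < w 0 := by
      rcases max_cases i1 i2 with ⟨he, -⟩ | ⟨he, -⟩ <;> rw [ht, he]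
      · exact lt_of_lt_of_le hi1lt hpM
      · exact lt_of_lt_of_le hi2lt hpM
    have h3 : 3 ≤ (univ.filter (fun i : Fin (m + 1) => i ≤ t ∧ t < w i)).card := by
      apply three_le_card (x0 := 0) (x1 := i1) (x2 := i2)
      · simp only [Finset.mem_filter, Finset.mem_univ, true_and]
        exact ⟨Fin.zero_le _, htlt⟩
      · simp only [Finset.mem_filter, Finset.mem_univ, true_and]
        exact ⟨le_max_left _ _, htlt.trans hi1val⟩
      · simp only [Finset.mem_filter, Finset.mem_univ, true_and]
        exact ⟨le_max_right _ _, htlt.trans hi2val⟩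
      · exact (ne_of_lt hi1pos)
      · exact (ne_of_lt hi2pos)
      · exact hine
    have hcount := count_letter_ge hl.1 t
    have := h2 l hl (t : ℕ)
    omega
  · -- value side with w⁻¹, t = M - 1
    have hM1 : 1 ≤ (w 0 : ℕ) := by
      rcases Nat.eq_zero_or_pos (w 0 : ℕ) with h' | h'
      · exact absurd (Fin.ext h' : w 0 = 0) hm
      · exact h'
    set t : Fin (m + 1) := ⟨(w 0 : ℕ) - 1, by omega⟩ with ht
    have hrev : IsReducedWord (m + 1) w⁻¹ l.reverse := isReducedWord_reverse hl
    have h3 : 3 ≤ (univ.filter (fun v : Fin (m + 1) => v ≤ t ∧ t < w⁻¹ v)).card := by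
      apply three_le_card (x0 := 0) (x1 := w j1) (x2 := w j2)
      · simp only [Finset.mem_filter, Finset.mem_univ, true_and]
        refine ⟨Fin.zero_le _, ?_⟩
        have : (w 0 : ℕ) ≤ (w⁻¹ 0 : ℕ) := hMp
        simp only [Fin.lt_def, ht]
        omega
      · simp only [Finset.mem_filter, Finset.mem_univ, true_and]
        constructor
        · have : (w j1 : ℕ) < (w 0 : ℕ) := hj1.2.2
          simp only [Fin.le_def, ht]
          omega
        · have hj1inv : w⁻¹ (w j1) = j1 := w.symm_apply_apply j1
          rw [hj1inv]
          have h1 : (w 0 : ℕ) ≤ (w⁻¹ 0 : ℕ) := hMp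
          have h2' : (w⁻¹ 0 : ℕ) < (j1 : ℕ) := hj1.1
          simp only [Fin.lt_def, ht]
          omega
      · simp only [Finset.mem_filter, Finset.mem_univ, true_and]
        constructor
        · have : (w j2 : ℕ) < (w 0 : ℕ) := hj2.2.2
          simp only [Fin.le_def, ht]
          omega
        · have hj2inv : w⁻¹ (w j2) = j2 := w.symm_apply_apply j2
          rw [hj2inv]
          have h1 : (w 0 : ℕ) ≤ (w⁻¹ 0 : ℕ) := hMp
          have h2' : (w⁻¹ 0 : ℕ) < (j2 : ℕ) := hj2.1
          simp only [Fin.lt_def, ht]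
          omega
      · exact (ne_of_lt hj1.2.1)
      · exact (ne_of_lt hj2.2.1)
      · exact fun h => hjne (w.injective h)
    have hcount := count_letter_ge hrev.1 t
    have hcnt2 := h2 l hl (t : ℕ)
    rw [List.count_reverse] at hcount
    omega

/-- embed a permutation of `Fin m` into `Fin (m+1)` fixing `0`. -/
def embedSucc {m : ℕ} (w : Equiv.Perm (Fin m)) : Equiv.Perm (Fin (m + 1)) :=
  Equiv.Perm.decomposeFin.symm (0, w)

lemma embedSucc_zero {m : ℕ} (w : Equiv.Perm (Fin m)) : embedSucc w 0 = 0 :=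
  Equiv.Perm.decomposeFin_symm_apply_zero 0 w

lemma embedSucc_succ {m : ℕ} (w : Equiv.Perm (Fin m)) (i : Fin m) :
    embedSucc w i.succ = (w i).succ := by
  rw [embedSucc, Equiv.Perm.decomposeFin_symm_apply_succ]
  simp

lemma embedSucc_mul {m : ℕ} (a b : Equiv.Perm (Fin m)) :
    embedSucc (a * b) = embedSucc a * embedSucc b := by
  ext x
  rcases Fin.eq_zero_or_eq_succ x with rfl | ⟨i, rfl⟩
  · simp [embedSucc_zero]
  · simp [embedSucc_succ]

lemma embedSucc_one {m : ℕ} : embedSucc (1 : Equiv.Perm (Fin m)) = 1 := by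
  ext x
  rcases Fin.eq_zero_or_eq_succ x with rfl | ⟨i, rfl⟩
  · simp [embedSucc_zero]
  · simp [embedSucc_succ]

lemma embedSucc_injective {m : ℕ} : Function.Injective (embedSucc (m := m)) := by
  intro a b h
  ext i
  have := congrArg (fun f : Equiv.Perm (Fin (m + 1)) => f i.succ) h
  simp only [embedSucc_succ] at this
  exact congrArg Fin.val (Fin.succ_injective _ this)

lemma embedSucc_adjT {m : ℕ} (k : ℕ) :
    embedSucc (adjTransposition m k) = adjTransposition (m + 1) (k + 1) := by
  by_cases h : k + 1 < m
  · have h' : (k + 1) + 1 < m + 1 := by omega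
    rw [adjT_of_lt h, adjT_of_lt h']
    ext x
    rcases Fin.eq_zero_or_eq_succ x with rfl | ⟨i, rfl⟩
    · rw [embedSucc_zero]
      rw [Equiv.swap_apply_of_ne_of_ne]
      · intro he
        have := congrArg Fin.val he
        simp at this
      · intro he
        have := congrArg Fin.val he
        simp at this
    · rw [embedSucc_succ]
      set a : Fin m := ⟨k, Nat.lt_of_succ_lt h⟩
      set b : Fin m := ⟨k + 1, h⟩
      set a' : Fin (m + 1) := ⟨k + 1, Nat.lt_of_succ_lt h'⟩
      set b' : Fin (m + 1) := ⟨k + 2, h'⟩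
      have hsa : a.succ = a' := by simp [a, a', Fin.ext_iff]
      have hsb : b.succ = b' := by simp [b, b', Fin.ext_iff]
      by_cases h1 : i = a
      · rw [h1, Equiv.swap_apply_left, hsb, ← hsa, Equiv.swap_apply_left]
      by_cases h2 : i = b
      · rw [h2, Equiv.swap_apply_right, hsa, ← hsb, Equiv.swap_apply_right]
      · rw [Equiv.swap_apply_of_ne_of_ne h1 h2, Equiv.swap_apply_of_ne_of_ne]
        · rw [← hsa]
          exact fun he => h1 (Fin.succ_injective _ he)
        · rw [← hsb]
          exact fun he => h2 (Fin.succ_injective _ he)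
  · have h' : ¬ ((k + 1) + 1 < m + 1) := by omega
    rw [adjTransposition, dif_neg h, adjTransposition, dif_neg h', embedSucc_one]

lemma embedSucc_prod {m : ℕ} (l : List ℕ) :
    ((l.map Nat.succ).map (adjTransposition (m + 1))).prod =
      embedSucc ((l.map (adjTransposition m)).prod) := by
  induction l with
  | nil => simp [embedSucc_one]
  | cons j t ih =>
    simp only [List.map_cons, List.prod_cons, ih, embedSucc_mul, embedSucc_adjT]

lemma isWord_embedSucc {m : ℕ} {w : Equiv.Perm (Fin m)} {l : List ℕ}
    (hw : IsWord m w l) : IsWord (m + 1) (embedSucc w) (l.map Nat.succ) := by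
  constructor
  · intro x hx
    simp only [List.mem_map] at hx
    obtain ⟨k, hk, rfl⟩ := hx
    have := hw.1 k hk
    omega
  · rw [embedSucc_prod, ← hw.2]

lemma invF_embedSucc {m : ℕ} (w : Equiv.Perm (Fin m)) :
    invF (embedSucc w) = invF w := by
  unfold invF
  symm
  apply Finset.card_bij (fun p _ => (p.1.succ, p.2.succ))
  · rintro ⟨i, j⟩ hm
    rw [mem_invSet] at hm ⊢
    refine ⟨Fin.succ_lt_succ_iff.2 hm.1, ?_⟩
    simp only [embedSucc_succ]
    exact Fin.succ_lt_succ_iff.2 hm.2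
  · rintro ⟨i1, j1⟩ h1 ⟨i2, j2⟩ h2 he
    simp only [Prod.mk.injEq] at he ⊢
    exact ⟨Fin.succ_injective _ he.1, Fin.succ_injective _ he.2⟩
  · rintro ⟨x, y⟩ hm
    rw [mem_invSet] at hm
    obtain ⟨hxy, hlt⟩ := hm
    rcases Fin.eq_zero_or_eq_succ x with rfl | ⟨i, rfl⟩
    · exfalso
      rw [embedSucc_zero] at hlt
      exact absurd hlt (Fin.not_lt_zero _)
    rcases Fin.eq_zero_or_eq_succ y with rfl | ⟨j, rfl⟩
    · exact absurd hxy (Fin.not_lt_zero _)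
    refine ⟨(i, j), ?_, rfl⟩
    rw [mem_invSet]
    simp only [embedSucc_succ] at hlt
    exact ⟨Fin.succ_lt_succ_iff.1 hxy, Fin.succ_lt_succ_iff.1 hlt⟩

lemma map_succ_pred {l : List ℕ} (h : 0 ∉ l) : (l.map (fun x : ℕ => x - 1)).map Nat.succ = l := by
  rw [List.map_map]
  have : ∀ a ∈ l, (Nat.succ ∘ (fun x : ℕ => x - 1)) a = id a := by
    intro a ha
    have : a ≠ 0 := fun h' => h (h' ▸ ha)
    simp only [Function.comp_apply, id_eq]
    omega
  rw [List.map_congr_left this, List.map_id]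

lemma isKBoolean_embedSucc_iff {m : ℕ} (w : Equiv.Perm (Fin m)) :
    IsKBoolean 2 m w ↔ IsKBoolean 2 (m + 1) (embedSucc w) := by
  constructor
  · intro h l hl i
    have h0 : 0 ∉ l := zero_notin_reduced (embedSucc_zero w) hl
    set l0 := l.map (fun x : ℕ => x - 1) with hl0
    have hmap : l0.map Nat.succ = l := map_succ_pred h0
    have hword : IsWord m w l0 := by
      constructor
      · intro k hk
        simp only [l0, List.mem_map] at hk
        obtain ⟨x, hx, rfl⟩ := hk
        have hx1 := hl.1.1 x hx
        have hx0 : x ≠ 0 := fun h' => h0 (h' ▸ hx)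
        omega
      · have hp : ((l0.map Nat.succ).map (adjTransposition (m + 1))).prod =
            embedSucc ((l0.map (adjTransposition m)).prod) := embedSucc_prod l0
        rw [hmap] at hp
        exact embedSucc_injective (hl.1.2.trans hp)
    have hred : IsReducedWord m ((l0.map (adjTransposition m)).prod) l0 := by
      rw [isReducedWord_iff]
      refine ⟨⟨hword.1, rfl⟩, ?_⟩
      have hwp : w = (l0.map (adjTransposition m)).prod := hword.2
      rw [← hwp]
      have hlen : l0.length = l.length := by simp [l0]
      rw [hlen, (isReducedWord_iff.1 hl).2, invF_embedSucc]
    have hwp : w = (l0.map (adjTransposition m)).prod := hword.2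
    rw [← hwp] at hred
    rcases Nat.eq_zero_or_pos i with rfl | hi
    · rw [List.count_eq_zero_of_not_mem h0]
      omega
    · obtain ⟨i', rfl⟩ : ∃ i', i = i' + 1 := ⟨i - 1, by omega⟩
      have := h l0 hred i'
      have hc : l.count (i' + 1) = l0.count i' := by
        rw [← hmap]
        exact List.count_map_of_injective l0 Nat.succ Nat.succ_injective i'
      omega
  · intro h l0 hl0 i
    set l := l0.map Nat.succ with hl
    have hword : IsWord (m + 1) (embedSucc w) l := isWord_embedSucc hl0.1
    have hred : IsReducedWord (m + 1) (embedSucc w) l := by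
      rw [isReducedWord_iff]
      refine ⟨hword, ?_⟩
      have : l.length = l0.length := by simp [l]
      rw [this, (isReducedWord_iff.1 hl0).2, invF_embedSucc]
    have := h l hred (i + 1)
    have hc : l.count (i + 1) = l0.count i :=
      List.count_map_of_injective l0 Nat.succ Nat.succ_injective i
    omega

lemma aStat_inv {m : ℕ} (w : Equiv.Perm (Fin (m + 1))) : aStat w⁻¹ = bStat w := by
  show Nat.card {i : Fin (m + 1) // 0 < i ∧ i < (w⁻¹)⁻¹ 0 ∧ w⁻¹ 0 < w⁻¹ i}
    = Nat.card {i : Fin (m + 1) // w⁻¹ 0 < i ∧ 0 < w i ∧ w i < w 0}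
  symm
  apply Nat.card_congr
  refine Equiv.subtypeEquiv (w : Fin (m + 1) ≃ Fin (m + 1)) ?_
  intro i
  simp only [inv_inv, Equiv.Perm.coe_inv, Equiv.symm_apply_apply]
  constructor
  · rintro ⟨h1, h2, h3⟩; exact ⟨h2, h3, h1⟩
  · rintro ⟨h1, h2, h3⟩; exact ⟨h3, h1, h2⟩

lemma bStat_inv {m : ℕ} (w : Equiv.Perm (Fin (m + 1))) : bStat w⁻¹ = aStat w := by
  have := aStat_inv w⁻¹
  rw [inv_inv] at this
  exact this.symm

lemma movesZero_inv {m : ℕ} {w : Equiv.Perm (Fin (m + 1))} (h : MovesZero w) :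
    MovesZero w⁻¹ := by
  have h' : w 0 ≠ 0 := h
  show w⁻¹ 0 ≠ 0
  intro he
  have h2 := congrArg w he
  simp only [Equiv.Perm.coe_inv, Equiv.apply_symm_apply] at h2
  exact h' h2.symm

lemma card_filter_split {α : Type*} [Fintype α] (p q : α → Prop)
    [DecidablePred p] [DecidablePred q] :
    (univ.filter p).card =
      (univ.filter fun x => p x ∧ q x).card + (univ.filter fun x => p x ∧ ¬ q x).card := by
  rw [← Finset.filter_filter, ← Finset.filter_filter]
  exact (Finset.card_filter_add_card_filter_not (s := univ.filter p) (p := q)).symm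

lemma card_filter_congr' {α : Type*} [Fintype α] (p q : α → Prop)
    [DecidablePred p] [DecidablePred q] (h : ∀ x, p x ↔ q x) :
    (univ.filter p).card = (univ.filter q).card := by
  apply Finset.card_bij (fun x _ => x)
  · intro x hx
    simp only [Finset.mem_filter, Finset.mem_univ, true_and] at hx ⊢
    exact (h x).1 hx
  · intro x _ y _ he
    exact he
  · intro x hx
    refine ⟨x, ?_, rfl⟩
    simp only [Finset.mem_filter, Finset.mem_univ, true_and] at hx ⊢
    exact (h x).2 hx

/-- for `n ≥ 4`,
`f(n) = f(n−1) + 2 f⁰(n) + 2 f¹(n) − f⁰⁰(n) − 2 f⁰¹(n) − f¹¹(n)`. -/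
theorem two_boolean_inclusion_exclusion (n : ℕ) (hn : 4 ≤ n) :
    (numTwoBoolean n : ℤ) =
      numTwoBoolean (n - 1) + 2 * fA n 0 + 2 * fA n 1
        - fAB n 0 0 - 2 * fAB n 0 1 - fAB n 1 1 := by
  classical
  obtain ⟨m, rfl⟩ : ∃ m, n = m + 1 := ⟨n - 1, by omega⟩
  have hsub : m + 1 - 1 = m := rfl
  rw [hsub]
  set K : Equiv.Perm (Fin (m + 1)) → Prop := IsKBoolean 2 (m + 1) with hK
  have hnum : numTwoBoolean (m + 1) = (univ.filter K).card := natCard_eq_filter _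
  have hnumm : numTwoBoolean m =
      (univ.filter fun w : Equiv.Perm (Fin m) => IsKBoolean 2 m w).card := natCard_eq_filter _
  have hA : ∀ a, fA (m + 1) a =
      (univ.filter fun w : Equiv.Perm (Fin (m + 1)) =>
        K w ∧ MovesZero w ∧ aStat w = a).card := fun a => natCard_eq_filter _
  have hAB : ∀ a b, fAB (m + 1) a b =
      (univ.filter fun w : Equiv.Perm (Fin (m + 1)) =>
        K w ∧ MovesZero w ∧ aStat w = a ∧ bStat w = b).card := fun a b => natCard_eq_filter _
  -- the embedding bijection
  have key : ∀ w : Equiv.Perm (Fin (m + 1)), w 0 = 0 →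
      embedSucc ((Equiv.Perm.decomposeFin w).2) = w := by
    intro w h0
    have hw : Equiv.Perm.decomposeFin.symm (Equiv.Perm.decomposeFin w) = w :=
      Equiv.symm_apply_apply _ _
    have h1 : Equiv.Perm.decomposeFin.symm
        ((Equiv.Perm.decomposeFin w).1, (Equiv.Perm.decomposeFin w).2) = w := by
      rw [Prod.mk.eta]; exact hw
    have h2 : (Equiv.Perm.decomposeFin w).1 = w 0 := by
      conv_rhs => rw [← h1]
      rw [Equiv.Perm.decomposeFin_symm_apply_zero]
    rw [embedSucc, ← h0, ← h2]
    exact h1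
  have e3 : (univ.filter fun w : Equiv.Perm (Fin (m + 1)) => K w ∧ w 0 = 0).card
      = (univ.filter fun w : Equiv.Perm (Fin m) => IsKBoolean 2 m w).card := by
    apply Finset.card_bij' (fun w _ => (Equiv.Perm.decomposeFin w).2)
      (fun w' _ => embedSucc w')
    · intro w hw
      simp only [Finset.mem_filter, Finset.mem_univ, true_and] at hw ⊢
      have hk := key w hw.2
      rw [isKBoolean_embedSucc_iff, hk]
      exact hw.1
    · intro w' hw'
      simp only [Finset.mem_filter, Finset.mem_univ, true_and] at hw' ⊢
      exact ⟨(isKBoolean_embedSucc_iff w').1 hw', embedSucc_zero w'⟩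
    · intro w hw
      simp only [Finset.mem_filter, Finset.mem_univ, true_and] at hw
      exact key w hw.2
    · intro w' _
      apply embedSucc_injective
      exact key _ (embedSucc_zero w')
  have q1 : (univ.filter K).card
      = (univ.filter fun w => K w ∧ w 0 = 0).card
      + (univ.filter fun w => K w ∧ MovesZero w).card := by
    have h1 : (univ.filter fun w : Equiv.Perm (Fin (m + 1)) => K w ∧ ¬(w 0 = 0)).card
        = (univ.filter fun w => K w ∧ MovesZero w).card :=
      card_filter_congr' _ _ (fun w => Iff.rfl)
    rw [card_filter_split K (fun w => w 0 = 0), h1]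
  -- aStat partition of the moving part
  have q2 : (univ.filter fun w => K w ∧ MovesZero w).card
      = (univ.filter fun w => K w ∧ MovesZero w ∧ aStat w = 0).card
      + (univ.filter fun w => (K w ∧ MovesZero w) ∧ ¬(aStat w = 0)).card := by
    have h1 : (univ.filter fun w : Equiv.Perm (Fin (m + 1)) =>
        (K w ∧ MovesZero w) ∧ aStat w = 0).card
        = (univ.filter fun w => K w ∧ MovesZero w ∧ aStat w = 0).card :=
      card_filter_congr' _ _ (fun w => by tauto)
    rw [card_filter_split (fun w => K w ∧ MovesZero w) (fun w => aStat w = 0), h1]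
  have q3 : (univ.filter fun w => (K w ∧ MovesZero w) ∧ ¬(aStat w = 0)).card
      = (univ.filter fun w => K w ∧ MovesZero w ∧ aStat w = 1).card
      + (univ.filter fun w => (K w ∧ MovesZero w) ∧ 2 ≤ aStat w).card := by
    have h1 : (univ.filter fun w : Equiv.Perm (Fin (m + 1)) =>
        ((K w ∧ MovesZero w) ∧ ¬(aStat w = 0)) ∧ aStat w = 1).card
        = (univ.filter fun w => K w ∧ MovesZero w ∧ aStat w = 1).card := by
      refine card_filter_congr' _ _ (fun w => ?_)
      constructor
      · rintro ⟨⟨⟨hk, hm⟩, -⟩, h1⟩; exact ⟨hk, hm, h1⟩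
      · rintro ⟨hk, hm, h1⟩; exact ⟨⟨⟨hk, hm⟩, by omega⟩, h1⟩
    have h2 : (univ.filter fun w : Equiv.Perm (Fin (m + 1)) =>
        ((K w ∧ MovesZero w) ∧ ¬(aStat w = 0)) ∧ ¬(aStat w = 1)).card
        = (univ.filter fun w => (K w ∧ MovesZero w) ∧ 2 ≤ aStat w).card := by
      refine card_filter_congr' _ _ (fun w => ?_)
      constructor
      · rintro ⟨⟨⟨hk, hm⟩, h0⟩, h1⟩; exact ⟨⟨hk, hm⟩, by omega⟩
      · rintro ⟨⟨hk, hm⟩, h2⟩; exact ⟨⟨⟨hk, hm⟩, by omega⟩, by omega⟩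
    rw [card_filter_split (fun w => (K w ∧ MovesZero w) ∧ ¬(aStat w = 0))
      (fun w => aStat w = 1), h1, h2]
  have q4 : (univ.filter fun w => (K w ∧ MovesZero w) ∧ 2 ≤ aStat w).card
      = (univ.filter fun w => (K w ∧ MovesZero w) ∧ 2 ≤ aStat w ∧ bStat w = 0).card
      + (univ.filter fun w => (K w ∧ MovesZero w) ∧ 2 ≤ aStat w ∧ bStat w = 1).card := by
    have h1 : (univ.filter fun w : Equiv.Perm (Fin (m + 1)) =>
        ((K w ∧ MovesZero w) ∧ 2 ≤ aStat w) ∧ bStat w = 0).card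
        = (univ.filter fun w => (K w ∧ MovesZero w) ∧ 2 ≤ aStat w ∧ bStat w = 0).card :=
      card_filter_congr' _ _ (fun w => by tauto)
    have hempty : (univ.filter fun w : Equiv.Perm (Fin (m + 1)) =>
        (((K w ∧ MovesZero w) ∧ 2 ≤ aStat w) ∧ ¬(bStat w = 0)) ∧ ¬(bStat w = 1)).card
        = 0 := by
      rw [Finset.card_eq_zero, Finset.filter_eq_empty_iff]
      rintro w - ⟨⟨⟨⟨hk, hm⟩, ha⟩, hb0⟩, hb1⟩
      exact not_a2_b2 hk hm ⟨ha, by omega⟩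
    have h2 : (univ.filter fun w : Equiv.Perm (Fin (m + 1)) =>
        (((K w ∧ MovesZero w) ∧ 2 ≤ aStat w) ∧ ¬(bStat w = 0)) ∧ bStat w = 1).card
        = (univ.filter fun w => (K w ∧ MovesZero w) ∧ 2 ≤ aStat w ∧ bStat w = 1).card := by
      refine card_filter_congr' _ _ (fun w => ?_)
      constructor
      · rintro ⟨⟨⟨⟨hk, hm⟩, ha⟩, hb0⟩, hb1⟩
        exact ⟨⟨hk, hm⟩, ha, hb1⟩
      · rintro ⟨⟨hk, hm⟩, ha, hb1⟩
        exact ⟨⟨⟨⟨hk, hm⟩, ha⟩, by omega⟩, hb1⟩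
    rw [card_filter_split (fun w => (K w ∧ MovesZero w) ∧ 2 ≤ aStat w)
      (fun w => bStat w = 0), h1,
      card_filter_split (fun w => ((K w ∧ MovesZero w) ∧ 2 ≤ aStat w) ∧ ¬(bStat w = 0))
      (fun w => bStat w = 1), h2, hempty]
    omega
  -- bStat partitions
  have g0 : (univ.filter fun w => (K w ∧ MovesZero w) ∧ bStat w = 0).card
      = (univ.filter fun w => K w ∧ MovesZero w ∧ aStat w = 0 ∧ bStat w = 0).card
      + (univ.filter fun w => K w ∧ MovesZero w ∧ aStat w = 1 ∧ bStat w = 0).card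
      + (univ.filter fun w => (K w ∧ MovesZero w) ∧ 2 ≤ aStat w ∧ bStat w = 0).card := by
    have h1 : (univ.filter fun w : Equiv.Perm (Fin (m + 1)) =>
        ((K w ∧ MovesZero w) ∧ bStat w = 0) ∧ aStat w = 0).card
        = (univ.filter fun w => K w ∧ MovesZero w ∧ aStat w = 0 ∧ bStat w = 0).card :=
      card_filter_congr' _ _ (fun w => by tauto)
    have h2 : (univ.filter fun w : Equiv.Perm (Fin (m + 1)) =>
        (((K w ∧ MovesZero w) ∧ bStat w = 0) ∧ ¬(aStat w = 0)) ∧ aStat w = 1).card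
        = (univ.filter fun w => K w ∧ MovesZero w ∧ aStat w = 1 ∧ bStat w = 0).card := by
      refine card_filter_congr' _ _ (fun w => ?_)
      constructor
      · rintro ⟨⟨⟨⟨hk, hm⟩, hb⟩, -⟩, h1⟩; exact ⟨hk, hm, h1, hb⟩
      · rintro ⟨hk, hm, h1, hb⟩; exact ⟨⟨⟨⟨hk, hm⟩, hb⟩, by omega⟩, h1⟩
    have h3 : (univ.filter fun w : Equiv.Perm (Fin (m + 1)) =>
        (((K w ∧ MovesZero w) ∧ bStat w = 0) ∧ ¬(aStat w = 0)) ∧ ¬(aStat w = 1)).card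
        = (univ.filter fun w => (K w ∧ MovesZero w) ∧ 2 ≤ aStat w ∧ bStat w = 0).card := by
      refine card_filter_congr' _ _ (fun w => ?_)
      constructor
      · rintro ⟨⟨⟨⟨hk, hm⟩, hb⟩, h0⟩, h1⟩; exact ⟨⟨hk, hm⟩, by omega, hb⟩
      · rintro ⟨⟨hk, hm⟩, ha, hb⟩; exact ⟨⟨⟨⟨hk, hm⟩, hb⟩, by omega⟩, by omega⟩
    rw [card_filter_split (fun w => (K w ∧ MovesZero w) ∧ bStat w = 0)
      (fun w => aStat w = 0), h1,
      card_filter_split (fun w => ((K w ∧ MovesZero w) ∧ bStat w = 0) ∧ ¬(aStat w = 0))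
      (fun w => aStat w = 1), h2, h3, Nat.add_assoc]
  have g1 : (univ.filter fun w => (K w ∧ MovesZero w) ∧ bStat w = 1).card
      = (univ.filter fun w => K w ∧ MovesZero w ∧ aStat w = 0 ∧ bStat w = 1).card
      + (univ.filter fun w => K w ∧ MovesZero w ∧ aStat w = 1 ∧ bStat w = 1).card
      + (univ.filter fun w => (K w ∧ MovesZero w) ∧ 2 ≤ aStat w ∧ bStat w = 1).card := by
    have h1 : (univ.filter fun w : Equiv.Perm (Fin (m + 1)) =>
        ((K w ∧ MovesZero w) ∧ bStat w = 1) ∧ aStat w = 0).card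
        = (univ.filter fun w => K w ∧ MovesZero w ∧ aStat w = 0 ∧ bStat w = 1).card :=
      card_filter_congr' _ _ (fun w => by tauto)
    have h2 : (univ.filter fun w : Equiv.Perm (Fin (m + 1)) =>
        (((K w ∧ MovesZero w) ∧ bStat w = 1) ∧ ¬(aStat w = 0)) ∧ aStat w = 1).card
        = (univ.filter fun w => K w ∧ MovesZero w ∧ aStat w = 1 ∧ bStat w = 1).card := by
      refine card_filter_congr' _ _ (fun w => ?_)
      constructor
      · rintro ⟨⟨⟨⟨hk, hm⟩, hb⟩, -⟩, h1⟩; exact ⟨hk, hm, h1, hb⟩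
      · rintro ⟨hk, hm, h1, hb⟩; exact ⟨⟨⟨⟨hk, hm⟩, hb⟩, by omega⟩, h1⟩
    have h3 : (univ.filter fun w : Equiv.Perm (Fin (m + 1)) =>
        (((K w ∧ MovesZero w) ∧ bStat w = 1) ∧ ¬(aStat w = 0)) ∧ ¬(aStat w = 1)).card
        = (univ.filter fun w => (K w ∧ MovesZero w) ∧ 2 ≤ aStat w ∧ bStat w = 1).card := by
      refine card_filter_congr' _ _ (fun w => ?_)
      constructor
      · rintro ⟨⟨⟨⟨hk, hm⟩, hb⟩, h0⟩, h1⟩; exact ⟨⟨hk, hm⟩, by omega, hb⟩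
      · rintro ⟨⟨hk, hm⟩, ha, hb⟩; exact ⟨⟨⟨⟨hk, hm⟩, hb⟩, by omega⟩, by omega⟩
    rw [card_filter_split (fun w => (K w ∧ MovesZero w) ∧ bStat w = 1)
      (fun w => aStat w = 0), h1,
      card_filter_split (fun w => ((K w ∧ MovesZero w) ∧ bStat w = 1) ∧ ¬(aStat w = 0))
      (fun w => aStat w = 1), h2, h3, Nat.add_assoc]
  -- inverse bijections
  have hGA : ∀ b, (univ.filter fun w => (K w ∧ MovesZero w) ∧ bStat w = b).card
      = (univ.filter fun w => K w ∧ MovesZero w ∧ aStat w = b).card := by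
    intro b
    refine Finset.card_bij' (fun w _ => w⁻¹) (fun w _ => w⁻¹) ?_ ?_ ?_ ?_
    · intro w hw
      simp only [Finset.mem_filter, Finset.mem_univ, true_and] at hw ⊢
      obtain ⟨⟨hk, hm⟩, hb⟩ := hw
      exact ⟨isKBoolean_inv hk, movesZero_inv hm, by rw [aStat_inv]; exact hb⟩
    · intro w hw
      simp only [Finset.mem_filter, Finset.mem_univ, true_and] at hw ⊢
      obtain ⟨hk, hm, ha⟩ := hw
      exact ⟨⟨isKBoolean_inv hk, movesZero_inv hm⟩, by rw [bStat_inv]; exact ha⟩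
    · intro w _; simp
    · intro w _; simp
  have hswap : (univ.filter fun w => K w ∧ MovesZero w ∧ aStat w = 1 ∧ bStat w = 0).card
      = (univ.filter fun w => K w ∧ MovesZero w ∧ aStat w = 0 ∧ bStat w = 1).card := by
    refine Finset.card_bij' (fun w _ => w⁻¹) (fun w _ => w⁻¹) ?_ ?_ ?_ ?_
    · intro w hw
      simp only [Finset.mem_filter, Finset.mem_univ, true_and] at hw ⊢
      obtain ⟨hk, hm, ha, hb⟩ := hw
      exact ⟨isKBoolean_inv hk, movesZero_inv hm,
        by rw [aStat_inv]; exact hb, by rw [bStat_inv]; exact ha⟩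
    · intro w hw
      simp only [Finset.mem_filter, Finset.mem_univ, true_and] at hw ⊢
      obtain ⟨hk, hm, ha, hb⟩ := hw
      exact ⟨isKBoolean_inv hk, movesZero_inv hm,
        by rw [aStat_inv]; exact hb, by rw [bStat_inv]; exact ha⟩
    · intro w _; simp
    · intro w _; simp
  rw [hnum, hnumm, hA 0, hA 1, hAB 0 0, hAB 0 1, hAB 1 1]
  rw [e3] at q1
  have hg0 := g0
  have hg1 := g1
  have hga0 := hGA 0
  have hga1 := hGA 1
  omega
end

section
/- If w is a permutation of {1,…,n} with w(1) ≠ 1 that avoids the patterns 3421, 4312, 4321, and 456123, then a(w) ≤ 1 or b(w) ≤ 1. -/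
private lemma strictMono_vec4' {m : ℕ} {a b c d : Fin m} (h1 : a < b) (h2 : b < c)
    (h3 : c < d) : StrictMono (![a,b,c,d]) := by
  have l3 : (![a,b,c,d] : Fin 4 → Fin m) 3 = d := rfl
  intro i j hij
  fin_cases i <;> fin_cases j <;> simp_all [Matrix.cons_val_succ, l3] <;> omega

private lemma strictMono_vec6' {m : ℕ} {a b c d e f : Fin m} (h1 : a < b) (h2 : b < c)
    (h3 : c < d) (h4 : d < e) (h5 : e < f) : StrictMono (![a,b,c,d,e,f]) := by
  have l5 : (![a,b,c,d,e,f] : Fin 6 → Fin m) 5 = f := rfl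
  have l4 : (![a,b,c,d,e,f] : Fin 6 → Fin m) 4 = e := rfl
  have l3 : (![a,b,c,d,e,f] : Fin 6 → Fin m) 3 = d := rfl
  intro i j hij
  fin_cases i <;> fin_cases j <;> simp_all [Matrix.cons_val_succ, l3, l4, l5] <;> omega

/-- if `w(1) ≠ 1` and `w` avoids 3421, 4312, 4321, 456123, then
`a(w) ≤ 1` or `b(w) ≤ 1`. -/
theorem aStat_or_bStat_le_one (n : ℕ) (w : Equiv.Perm (Fin (n + 1))) (hw : w 0 ≠ 0)
    (h1 : ¬ ContainsPattern w [3, 4, 2, 1]) (h2 : ¬ ContainsPattern w [4, 3, 1, 2])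
    (h3 : ¬ ContainsPattern w [4, 3, 2, 1]) (h4 : ¬ ContainsPattern w [4, 5, 6, 1, 2, 3]) :
    aStat w ≤ 1 ∨ bStat w ≤ 1 := by
  by_contra hcon
  push_neg at hcon
  obtain ⟨ha, hb⟩ := hcon
  have ha' : 1 < Nat.card {i : Fin (n+1) // 0 < i ∧ i < w⁻¹ 0 ∧ w 0 < w i} := ha
  have hb' : 1 < Nat.card {i : Fin (n+1) // w⁻¹ 0 < i ∧ 0 < w i ∧ w i < w 0} := hb
  have hA := Finite.one_lt_card_iff_nontrivial.mp ha'
  have hB := Finite.one_lt_card_iff_nontrivial.mp hb'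
  obtain ⟨⟨x, hx⟩, ⟨y, hy⟩, hxy⟩ := hA
  obtain ⟨⟨u, hu⟩, ⟨v, hv⟩, huv⟩ := hB
  have hxy' : x ≠ y := fun h => hxy (Subtype.ext h)
  have huv' : u ≠ v := fun h => huv (Subtype.ext h)
  obtain ⟨i1, i2, h12, hi1, hi2⟩ : ∃ i1 i2 : Fin (n+1), i1 < i2 ∧
      (0 < i1 ∧ i1 < w⁻¹ 0 ∧ w 0 < w i1) ∧ (0 < i2 ∧ i2 < w⁻¹ 0 ∧ w 0 < w i2) := by
    rcases hxy'.lt_or_gt with h | h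
    · exact ⟨x, y, h, hx, hy⟩
    · exact ⟨y, x, h, hy, hx⟩
  obtain ⟨j1, j2, hj12, hj1, hj2⟩ : ∃ j1 j2 : Fin (n+1), j1 < j2 ∧
      (w⁻¹ 0 < j1 ∧ 0 < w j1 ∧ w j1 < w 0) ∧ (w⁻¹ 0 < j2 ∧ 0 < w j2 ∧ w j2 < w 0) := by
    rcases huv'.lt_or_gt with h | h
    · exact ⟨u, v, h, hu, hv⟩
    · exact ⟨v, u, h, hv, hu⟩
  set z := w⁻¹ 0 with hzdef
  have hz : w z = 0 := Equiv.apply_symm_apply w 0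
  have f0 : 0 < (w 0).val := Nat.pos_of_ne_zero (fun h => hw (Fin.ext h))
  have fa1 : (w 0).val < (w i1).val := hi1.2.2
  have fa2 : (w 0).val < (w i2).val := hi2.2.2
  have fb1 : 0 < (w j1).val := hj1.2.1
  have fb1' : (w j1).val < (w 0).val := hj1.2.2
  have fb2 : 0 < (w j2).val := hj2.2.1
  have fb2' : (w j2).val < (w 0).val := hj2.2.2
  have hne12 : w i1 ≠ w i2 := fun h => (ne_of_lt h12) (w.injective h)
  have hnej : w j1 ≠ w j2 := fun h => (ne_of_lt hj12) (w.injective h)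
  rcases hne12.lt_or_gt with hc | hc
  · rcases hnej.lt_or_gt with hd | hd
    · -- w i1 < w i2, w j1 < w j2 : pattern 456123 on 0 < i1 < i2 < z < j1 < j2
      apply h4
      refine ⟨![0, i1, i2, z, j1, j2],
        strictMono_vec6' hi1.1 h12 hi2.2.1 hj1.1 hj12, ?_⟩
      have hc' : (w i1).val < (w i2).val := hc
      have hd' : (w j1).val < (w j2).val := hd
      have l5 : (![(0 : Fin (n+1)), i1, i2, z, j1, j2] : Fin 6 → Fin (n+1)) 5 = j2 := rfl
      intro a b
      fin_cases a <;> fin_cases b <;>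
        (first
          | refine iff_of_true ?_ (by decide)
          | refine iff_of_false ?_ (by decide)) <;>
        (try simp [hz, l5]) <;>
        (try (simp only [Fin.lt_def, Fin.le_def, not_lt, Fin.val_zero, Fin.ext_iff, ne_eq]; omega))
    · -- w i1 < w i2, w j2 < w j1 : pattern 3421 on i1 < i2 < j1 < j2
      apply h1
      refine ⟨![i1, i2, j1, j2], strictMono_vec4' h12 (hi2.2.1.trans hj1.1) hj12, ?_⟩
      have hc' : (w i1).val < (w i2).val := hc
      have hd' : (w j2).val < (w j1).val := hd
      have l3 : (![i1, i2, j1, j2] : Fin 4 → Fin (n+1)) 3 = j2 := rfl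
      intro a b
      fin_cases a <;> fin_cases b <;>
        (first
          | refine iff_of_true ?_ (by decide)
          | refine iff_of_false ?_ (by decide)) <;>
        (try simp [hz, l3]) <;>
        (try (simp only [Fin.lt_def, Fin.le_def, not_lt, Fin.val_zero, Fin.ext_iff, ne_eq]; omega))
  · -- w i2 < w i1 : pattern 4312 on i1 < i2 < z < j1
    apply h2
    refine ⟨![i1, i2, z, j1], strictMono_vec4' h12 hi2.2.1 hj1.1, ?_⟩
    have hc' : (w i2).val < (w i1).val := hc
    have l3 : (![i1, i2, z, j1] : Fin 4 → Fin (n+1)) 3 = j1 := rfl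
    intro a b
    fin_cases a <;> fin_cases b <;>
      (first
        | refine iff_of_true ?_ (by decide)
        | refine iff_of_false ?_ (by decide)) <;>
      (try simp [hz, l3]) <;>
      (try (simp only [Fin.lt_def, Fin.le_def, not_lt, Fin.val_zero, Fin.ext_iff, ne_eq]; omega))
end

section
/- Let w be a permutation of {1,…,n} with w(1) ≠ 1 that avoids the patterns 3421, 4312, 4321, and 456123, and let c = c(w). Then the set {i : 1 < i < w⁻¹(1) and 1 < w(i) < w(1)} equals {2, 3, …, c+1}, and w(i) = i for every i with 2 ≤ i ≤ c+1. -/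
lemma sm4 {α : Type*} [Preorder α] {x0 x1 x2 x3 : α}
    (h01 : x0 < x1) (h12 : x1 < x2) (h23 : x2 < x3) : StrictMono ![x0,x1,x2,x3] := by
  intro a b hab
  fin_cases a <;> fin_cases b <;> simp_all <;> first
    | exact h01 | exact h12 | exact h23
    | exact h01.trans h12 | exact h12.trans h23 | exact (h01.trans h12).trans h23

lemma contains_chain4 {n : ℕ} (w : Equiv.Perm (Fin n)) (p : List ℕ) (hp : p.length = 4)
    (x0 x1 x2 x3 : Fin n) (h01 : x0 < x1) (h12 : x1 < x2) (h23 : x2 < x3)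
    (hiff : ∀ a b : Fin 4, w (![x0,x1,x2,x3] a) < w (![x0,x1,x2,x3] b) ↔
      p.get (Fin.cast hp.symm a) < p.get (Fin.cast hp.symm b)) :
    ContainsPattern w p := by
  refine ⟨fun a => ![x0,x1,x2,x3] (Fin.cast hp a), ?_, ?_⟩
  · exact fun a b hab => sm4 h01 h12 h23 hab
  · intro a b
    have := hiff (Fin.cast hp a) (Fin.cast hp b)
    simpa using this

lemma contains_3421 {n : ℕ} (w : Equiv.Perm (Fin n)) (x0 x1 x2 x3 : Fin n)
    (h01 : x0 < x1) (h12 : x1 < x2) (h23 : x2 < x3)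
    (v32 : w x3 < w x2) (v20 : w x2 < w x0) (v01 : w x0 < w x1) :
    ContainsPattern w [3,4,2,1] := by
  apply contains_chain4 w [3,4,2,1] rfl x0 x1 x2 x3 h01 h12 h23
  intro a b
  have v31 : w x3 < w x1 := (v32.trans v20).trans v01
  have v30 : w x3 < w x0 := v32.trans v20
  have v21 : w x2 < w x1 := v20.trans v01
  fin_cases a <;> fin_cases b <;> simp_all [lt_asymm, lt_irrefl] <;> decide

lemma contains_4321 {n : ℕ} (w : Equiv.Perm (Fin n)) (x0 x1 x2 x3 : Fin n)
    (h01 : x0 < x1) (h12 : x1 < x2) (h23 : x2 < x3)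
    (v32 : w x3 < w x2) (v21 : w x2 < w x1) (v10 : w x1 < w x0) :
    ContainsPattern w [4,3,2,1] := by
  apply contains_chain4 w [4,3,2,1] rfl x0 x1 x2 x3 h01 h12 h23
  intro a b
  have v31 : w x3 < w x1 := v32.trans v21
  have v30 : w x3 < w x0 := v31.trans v10
  have v20 : w x2 < w x0 := v21.trans v10
  fin_cases a <;> fin_cases b <;> simp_all [lt_asymm, lt_irrefl] <;> decide

lemma contains_4312 {n : ℕ} (w : Equiv.Perm (Fin n)) (x0 x1 x2 x3 : Fin n)
    (h01 : x0 < x1) (h12 : x1 < x2) (h23 : x2 < x3)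
    (v23 : w x2 < w x3) (v31 : w x3 < w x1) (v10 : w x1 < w x0) :
    ContainsPattern w [4,3,1,2] := by
  apply contains_chain4 w [4,3,1,2] rfl x0 x1 x2 x3 h01 h12 h23
  intro a b
  have v21 : w x2 < w x1 := v23.trans v31
  have v30 : w x3 < w x0 := v31.trans v10
  have v20 : w x2 < w x0 := v21.trans v10
  fin_cases a <;> fin_cases b <;> simp_all [lt_asymm, lt_irrefl] <;> decide

/-- if `w(1) ≠ 1` (in 1-indexed notation; here `w 0 ≠ 0`) and `w` avoids
the four patterns, then the set defining `c(w)` is exactly the 0-indexed positions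
`{1, …, c}` and `w` fixes each of these positions. -/
theorem cStat_positions (n : ℕ) (w : Equiv.Perm (Fin (n + 1))) (hw : w 0 ≠ 0)
    (h1 : ¬ ContainsPattern w [3, 4, 2, 1]) (h2 : ¬ ContainsPattern w [4, 3, 1, 2])
    (h3 : ¬ ContainsPattern w [4, 3, 2, 1]) (h4 : ¬ ContainsPattern w [4, 5, 6, 1, 2, 3]) :
    (∀ i : Fin (n + 1),
        (0 < i ∧ i < w⁻¹ 0 ∧ 0 < w i ∧ w i < w 0) ↔ 1 ≤ (i : ℕ) ∧ (i : ℕ) ≤ cStat w) ∧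
      ∀ i : Fin (n + 1), 1 ≤ (i : ℕ) → (i : ℕ) ≤ cStat w → w i = i := by
  classical
  obtain _ | m := n
  · exact absurd (Fin.fin_one_eq_zero (w 0)) hw
  set z := w⁻¹ 0 with hzdef
  have hwz : w z = 0 := w.apply_symm_apply 0
  have hz0 : z ≠ 0 := by
    intro h; rw [h] at hwz; exact hw hwz
  have hinv : ∀ i : Fin (m + 2), w i = 0 → i = z := by
    intro i hi
    exact w.injective (by rw [hi, hwz])
  set P : Fin (m + 2) → Prop := fun i => 0 < i ∧ i < z ∧ 0 < w i ∧ w i < w 0 with hPdef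
  -- basic: nonzero value at non-z position
  have hpos : ∀ i : Fin (m + 2), i ≠ z → 0 < w i := by
    intro i hi
    rcases Fin.pos_iff_ne_zero.mpr (fun h => hi (hinv i h)) with h
    exact h
  -- downward closure
  have closed : ∀ i, P i → ∀ p : Fin (m + 2), 0 < p → p < i → P p := by
    intro i ⟨hi0, hiz, hwi0, hwi⟩ p hp0 hpi
    have hpz : p < z := hpi.trans hiz
    have hwp0 : 0 < w p := hpos p (ne_of_lt hpz)
    refine ⟨hp0, hpz, hwp0, ?_⟩
    by_contra hle
    have hne : w 0 ≠ w p := fun h => (ne_of_gt hp0) (w.injective h.symm)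
    have h0p : w 0 < w p := lt_of_le_of_ne (not_lt.mp hle) hne
    exact h1 (contains_3421 w 0 p i z hp0 hpi hiz (hwz ▸ hwi0) hwi h0p)
  -- monotone on P
  have mono : ∀ i j, P i → P j → i < j → w i < w j := by
    intro i j ⟨hi0, hiz, hwi0, hwi⟩ ⟨hj0, hjz, hwj0, hwj⟩ hij
    by_contra hle
    have hne : w j ≠ w i := fun h => (ne_of_lt hij) (w.injective h.symm)
    have hji : w j < w i := lt_of_le_of_ne (not_lt.mp hle) hne
    exact h3 (contains_4321 w 0 i j z hi0 hij hjz (hwz ▸ hwj0) hji hwi)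
  -- w i ≥ i on P
  have ge : ∀ M : ℕ, ∀ i : Fin (m + 2), (i : ℕ) = M → P i → M ≤ (w i : ℕ) := by
    intro M
    induction M using Nat.strong_induction_on with
    | _ M IH =>
      intro i hiM hPi
      obtain ⟨hi0, hiz, hwi0, hwi⟩ := hPi
      have hM1 : 1 ≤ M := by
        have := hi0; rw [Fin.pos_iff_ne_zero] at this
        rcases Nat.eq_zero_or_pos M with h0 | h1
        · exact absurd (Fin.ext (by omega : (i:ℕ) = ((0 : Fin (m+2)):ℕ))) this
        · exact h1
      rcases Nat.lt_or_ge 1 M with hM2 | hM2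
      · -- M ≥ 2
        have hiM2 : M < m + 2 := hiM ▸ i.isLt
        set j : Fin (m + 2) := ⟨M - 1, by omega⟩ with hjdef
        have hj0 : 0 < j := by rw [Fin.lt_def]; simp [hjdef]; omega
        have hji : j < i := by rw [Fin.lt_def]; simp [hjdef]; omega
        have hPj : P j := closed i ⟨hi0, hiz, hwi0, hwi⟩ j hj0 hji
        have hIH : M - 1 ≤ (w j : ℕ) := IH (M - 1) (by omega) j rfl hPj
        have hlt : w j < w i := mono j i hPj ⟨hi0, hiz, hwi0, hwi⟩ hji
        rw [Fin.lt_def] at hlt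
        omega
      · -- M = 1
        rw [Fin.lt_def] at hwi0
        simpa using by omega
  -- w fixes P
  have fix : ∀ M : ℕ, ∀ i : Fin (m + 2), (i : ℕ) = M → P i → w i = i := by
    intro M
    induction M using Nat.strong_induction_on with
    | _ M IH =>
      intro i hiM hPi
      obtain ⟨hi0, hiz, hwi0, hwi⟩ := hPi
      by_contra hne
      have hgewi : M ≤ (w i : ℕ) := ge M i hiM ⟨hi0, hiz, hwi0, hwi⟩
      have hlt : M < (w i : ℕ) := by
        rcases hgewi.lt_or_eq with h | h
        · exact h
        · exact absurd (Fin.ext (by omega : ((w i : ℕ)) = (i : ℕ))) hne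
      set q : Fin (m + 2) := w⁻¹ i with hqdef
      have hq : w q = i := w.apply_symm_apply i
      have hq0 : q ≠ 0 := by
        intro h
        rw [h] at hq
        rw [Fin.lt_def] at hwi
        have : (i : ℕ) = ((w 0 : ℕ)) := by rw [hq]
        omega
      have hqi : (i : ℕ) < (q : ℕ) := by
        by_contra hle
        have hqnei : q ≠ i := by
          intro h; rw [h] at hq; exact hne hq
        have hqlti : q < i := by
          rw [Fin.lt_def]
          rcases Nat.lt_or_ge (q : ℕ) (i : ℕ) with h | h
          · exact h
          · exact absurd (Fin.ext (by omega)) hqnei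
        have hq0' : 0 < q := Fin.pos_iff_ne_zero.mpr hq0
        have hPq : P q := closed i ⟨hi0, hiz, hwi0, hwi⟩ q hq0' hqlti
        have := IH (q : ℕ) (by rw [Fin.lt_def] at hqlti; omega) q rfl hPq
        rw [this] at hq
        exact (ne_of_lt hqlti) (hq ▸ rfl)
      have hqz : q ≠ z := by
        intro h
        rw [h, hwz] at hq
        rw [Fin.lt_def] at hi0
        have : ((0 : Fin (m+2)) : ℕ) = (i : ℕ) := by rw [hq]
        simp at this; omega
      have hiwi : i < w i := by rw [Fin.lt_def]; omega
      rcases lt_or_gt_of_ne hqz with hqltz | hzltq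
      · -- q < z : contradiction with mono
        have hPq : P q := by
          refine ⟨?_, hqltz, ?_, ?_⟩
          · rw [Fin.lt_def]; simp; omega
          · rw [hq]; rw [Fin.lt_def]; simp; omega
          · rw [hq]; exact hiwi.trans hwi
        have := mono i q ⟨hi0, hiz, hwi0, hwi⟩ hPq (by rw [Fin.lt_def]; omega)
        rw [hq, Fin.lt_def] at this
        omega
      · -- z < q : pattern 4312
        refine absurd (contains_4312 w 0 i z q hi0 hiz hzltq ?_ ?_ hwi) h2
        · rw [hwz, hq]; rw [Fin.lt_def]; simp; omega
        · rw [hq]; exact hiwi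
  -- the finset S
  set S : Finset (Fin (m + 2)) := Finset.univ.filter P with hSdef
  have hmemS : ∀ i, i ∈ S ↔ P i := by
    intro i; simp [hSdef]
  have hc : cStat w = S.card := by
    show Nat.card {i : Fin (m+2) // 0 < i ∧ i < w⁻¹ 0 ∧ 0 < w i ∧ w i < w 0} = S.card
    rw [Nat.card_eq_fintype_card, hSdef]
    rw [Fintype.card_subtype]
  have hval1 : ((1 : Fin (m + 2)) : ℕ) = 1 := rfl
  by_cases hS : S.Nonempty
  · set imax := S.max' hS with himaxdef
    have hmax_mem : P imax := (hmemS _).mp (S.max'_mem hS)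
    have hmax_le : ∀ j, P j → j ≤ imax := fun j hj => S.le_max' j ((hmemS j).mpr hj)
    have hSeq : S = Finset.Icc 1 imax := by
      ext j
      rw [hmemS, Finset.mem_Icc]
      constructor
      · intro hPj
        refine ⟨?_, hmax_le j hPj⟩
        have := hPj.1
        rw [Fin.lt_def] at this
        rw [Fin.le_def, hval1]
        omega
      · rintro ⟨h1j, hjmax⟩
        rcases eq_or_lt_of_le hjmax with h | h
        · rw [h]; exact hmax_mem
        · refine closed imax hmax_mem j ?_ h
          rw [Fin.le_def, hval1] at h1j
          rw [Fin.lt_def]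
          exact Nat.lt_of_lt_of_le (by simp) h1j
    have hcard : S.card = (imax : ℕ) := by
      rw [hSeq, Fin.card_Icc, hval1]
      omega
    have hiff : ∀ i : Fin (m + 2), P i ↔ 1 ≤ (i : ℕ) ∧ (i : ℕ) ≤ cStat w := by
      intro i
      rw [hc, hcard]
      constructor
      · intro hPi
        have h0 := hPi.1
        rw [Fin.lt_def] at h0
        have := hmax_le i hPi
        rw [Fin.le_def] at this
        constructor
        · simpa using by omega
        · exact this
      · rintro ⟨ha, hb⟩
        have : i ∈ Finset.Icc 1 imax := by
          rw [Finset.mem_Icc]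
          exact ⟨by rw [Fin.le_def, hval1]; omega, by rw [Fin.le_def]; omega⟩
        rw [← hSeq, hmemS] at this
        exact this
    refine ⟨hiff, ?_⟩
    intro i ha hb
    exact fix (i : ℕ) i rfl ((hiff i).mpr ⟨ha, hb⟩)
  · have hSempty : S = ∅ := Finset.not_nonempty_iff_eq_empty.mp hS
    have hc0 : cStat w = 0 := by rw [hc, hSempty]; simp
    constructor
    · intro i
      rw [hc0]
      constructor
      · intro hPi
        have : i ∈ S := (hmemS i).mpr hPi
        rw [hSempty] at this
        simp at this
      · rintro ⟨ha, hb⟩; omega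
    · intro i ha hb
      rw [hc0] at hb
      omega
end

section
/- A permutation w of {1,…,n} is boolean (i.e., every reduced word for w has pairwise distinct letters) if and only if w avoids the patterns 321 and 3412. -/
namespace BP
open Finset Equiv

variable {n : ℕ}

lemma adj_eq_swap {k : ℕ} (hk : k + 1 < n) :
    adjTransposition n k = Equiv.swap ⟨k, Nat.lt_of_succ_lt hk⟩ ⟨k + 1, hk⟩ := by
  simp [adjTransposition, hk]

lemma adj_val {k : ℕ} (hk : k + 1 < n) (x : Fin n) :
    ((adjTransposition n k x : Fin n) : ℕ) =
      if (x : ℕ) = k then k + 1 else if (x : ℕ) = k + 1 then k else x := by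
  rw [adj_eq_swap hk, Equiv.swap_apply_def]
  simp only [Fin.ext_iff]
  split_ifs <;> simp_all

lemma adj_mul_self {k : ℕ} :
    adjTransposition n k * adjTransposition n k = 1 := by
  by_cases hk : k + 1 < n
  · rw [adj_eq_swap hk, Equiv.swap_mul_self]
  · simp [adjTransposition, hk]

lemma adj_inv {k : ℕ} : (adjTransposition n k)⁻¹ = adjTransposition n k :=
  inv_eq_of_mul_eq_one_right adj_mul_self

lemma adj_lt_adj {k : ℕ} (hk : k + 1 < n) {a b : Fin n}
    (hab : a < b) (hne : ¬((a : ℕ) = k ∧ (b : ℕ) = k + 1)) :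
    adjTransposition n k a < adjTransposition n k b := by
  have ha := adj_val hk a
  have hb := adj_val hk b
  rw [Fin.lt_def] at *
  have h2 := b.isLt
  split_ifs at ha hb <;> omega

lemma adj_lt_iff {k : ℕ} (hk : k + 1 < n) {a b : Fin n}
    (h1 : ¬((a : ℕ) = k ∧ (b : ℕ) = k + 1)) (h2 : ¬((a : ℕ) = k + 1 ∧ (b : ℕ) = k)) :
    adjTransposition n k a < adjTransposition n k b ↔ a < b := by
  have ha := adj_val hk a
  have hb := adj_val hk b
  rw [Fin.lt_def, Fin.lt_def]
  have h3 := b.isLt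
  have h4 := a.isLt
  constructor <;> intro h <;> [skip; skip] <;> split_ifs at ha hb <;> omega

end BP
namespace BP
open Finset Equiv

variable {n : ℕ}

def invSet (w : Equiv.Perm (Fin n)) : Finset (Fin n × Fin n) :=
  Finset.univ.filter (fun p => p.1 < p.2 ∧ w p.2 < w p.1)

lemma invCount_eq (w : Equiv.Perm (Fin n)) : invCount w = (invSet w).card := by
  rw [invCount, Nat.card_eq_fintype_card, Fintype.card_subtype]
  rfl

lemma invSet_one : (invSet (1 : Equiv.Perm (Fin n))) = ∅ := by
  ext p
  simp only [invSet, Finset.mem_filter]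
  simp only [invSet, Finset.mem_filter, Finset.mem_univ, true_and, Finset.notMem_empty,
    iff_false, Equiv.Perm.one_apply]
  rintro ⟨h1, h2⟩
  exact absurd (h1.trans h2) (lt_irrefl _)

lemma inv_inv_card (w : Equiv.Perm (Fin n)) : (invSet w⁻¹).card = (invSet w).card := by
  apply Finset.card_nbij' (i := fun p => (w⁻¹ p.2, w⁻¹ p.1)) (j := fun q => (w q.2, w q.1))
  · rintro ⟨a, b⟩ h
    simp only [Finset.mem_coe, invSet, Finset.mem_filter, Finset.mem_univ, true_and] at h ⊢
    simpa using ⟨h.2, h.1⟩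
  · rintro ⟨a, b⟩ h
    simp only [Finset.mem_coe, invSet, Finset.mem_filter, Finset.mem_univ, true_and] at h ⊢
    simpa using ⟨h.2, h.1⟩
  · rintro ⟨a, b⟩ _; simp
  · rintro ⟨a, b⟩ _; simp

lemma inv_mul_adj_ascent {k : ℕ} (hk : k + 1 < n) (w : Equiv.Perm (Fin n))
    (hasc : w ⟨k, Nat.lt_of_succ_lt hk⟩ < w ⟨k + 1, hk⟩) :
    (invSet (w * adjTransposition n k)).card = (invSet w).card + 1 := by
  set s := adjTransposition n k with hs
  set e : Fin n × Fin n := (⟨k, Nat.lt_of_succ_lt hk⟩, ⟨k + 1, hk⟩) with he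
  have hsk : s ⟨k, Nat.lt_of_succ_lt hk⟩ = ⟨k + 1, hk⟩ := by
    rw [hs, adj_eq_swap hk]; exact Equiv.swap_apply_left _ _
  have hsk1 : s ⟨k + 1, hk⟩ = ⟨k, Nat.lt_of_succ_lt hk⟩ := by
    rw [hs, adj_eq_swap hk]; exact Equiv.swap_apply_right _ _
  have hss : ∀ x, s (s x) = x := by
    intro x
    have : s * s = 1 := adj_mul_self
    calc s (s x) = (s * s) x := rfl
    _ = x := by rw [this]; rfl
  have hemem : e ∈ invSet (w * s) := by
    rw [invSet, Finset.mem_filter]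
    simp only [invSet, Finset.mem_filter, Finset.mem_univ, true_and, he,
      Equiv.Perm.mul_apply, hsk, hsk1]
    exact ⟨by simp [Fin.lt_def], hasc⟩
  rw [← Finset.card_erase_add_one hemem]
  congr 1
  apply Finset.card_nbij' (i := fun p => (s p.1, s p.2)) (j := fun p => (s p.1, s p.2))
  · rintro ⟨a, b⟩ h
    simp only [Finset.mem_coe, Finset.mem_erase, invSet, Finset.mem_filter] at h ⊢
    simp only [Finset.mem_coe, Finset.mem_erase, invSet, Finset.mem_filter, Finset.mem_univ, true_and,
      Equiv.Perm.mul_apply] at h ⊢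
    obtain ⟨hne, hab, hw⟩ := h
    refine ⟨adj_lt_adj hk hab ?_, hw⟩
    rintro ⟨h1, h2⟩
    apply hne
    simp only [he, Prod.ext_iff, Fin.ext_iff]
    exact ⟨h1, h2⟩
  · rintro ⟨a, b⟩ h
    simp only [Finset.mem_coe, Finset.mem_erase, invSet, Finset.mem_filter] at h ⊢
    simp only [Finset.mem_coe, Finset.mem_erase, invSet, Finset.mem_filter, Finset.mem_univ, true_and,
      Equiv.Perm.mul_apply] at h ⊢
    obtain ⟨hab, hw⟩ := h
    have hne : ¬((a : ℕ) = k ∧ (b : ℕ) = k + 1) := by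
      rintro ⟨h1, h2⟩
      have ha : a = ⟨k, Nat.lt_of_succ_lt hk⟩ := Fin.ext h1
      have hb : b = ⟨k + 1, hk⟩ := Fin.ext h2
      rw [ha, hb] at hw
      exact absurd (hasc.trans hw) (lt_irrefl _)
    constructor
    · -- (s a, s b) ≠ e
      rintro hEq
      rw [Prod.ext_iff] at hEq
      obtain ⟨h1, h2⟩ := hEq
      simp only [he] at h1 h2
      have : a = s ⟨k, Nat.lt_of_succ_lt hk⟩ := by rw [← h1, hss]
      have hb : b = s ⟨k + 1, hk⟩ := by rw [← h2, hss]
      rw [hsk] at this; rw [hsk1] at hb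
      rw [this, hb] at hab
      simp [Fin.lt_def] at hab
    · exact ⟨adj_lt_adj hk hab hne, by rw [hss, hss]; exact hw⟩
  · rintro ⟨a, b⟩ _; simp [hss]
  · rintro ⟨a, b⟩ _; simp [hss]

lemma inv_mul_adj_descent {k : ℕ} (hk : k + 1 < n) (w : Equiv.Perm (Fin n))
    (hdesc : w ⟨k + 1, hk⟩ < w ⟨k, Nat.lt_of_succ_lt hk⟩) :
    (invSet w).card = (invSet (w * adjTransposition n k)).card + 1 := by
  have hsk : adjTransposition n k ⟨k, Nat.lt_of_succ_lt hk⟩ = ⟨k + 1, hk⟩ := by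
    rw [adj_eq_swap hk]; exact Equiv.swap_apply_left _ _
  have hsk1 : adjTransposition n k ⟨k + 1, hk⟩ = ⟨k, Nat.lt_of_succ_lt hk⟩ := by
    rw [adj_eq_swap hk]; exact Equiv.swap_apply_right _ _
  have := inv_mul_adj_ascent hk (w * adjTransposition n k)
    (by simpa [Equiv.Perm.mul_apply, hsk, hsk1] using hdesc)
  rwa [mul_assoc, adj_mul_self, mul_one] at this

end BP
namespace BP
open Finset Equiv

variable {n : ℕ}

lemma le_apply_of_strictMono (f : Fin n → Fin n) (hf : StrictMono f) (x : Fin n) : x ≤ f x := by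
  have key : ∀ m (hm : m < n), m ≤ (f ⟨m, hm⟩ : ℕ) := by
    intro m
    induction m with
    | zero => intro hm; exact Nat.zero_le _
    | succ p ih =>
      intro hm
      have hp : p < n := by omega
      have h1 : f ⟨p, hp⟩ < f ⟨p + 1, hm⟩ := hf (by simp [Fin.lt_def])
      have h2 := ih hp
      rw [Fin.lt_def] at h1
      omega
  rw [Fin.le_def]
  exact key x.val x.isLt

lemma eq_one_of_no_descent (w : Equiv.Perm (Fin n))
    (h : ∀ (k : ℕ) (hk : k + 1 < n),
      w ⟨k, Nat.lt_of_succ_lt hk⟩ < w ⟨k + 1, hk⟩) : w = 1 := by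
  have hmono : StrictMono w := by
    have key : ∀ (d av : ℕ) (hb : av + d < n), 0 < d →
        w ⟨av, by omega⟩ < w ⟨av + d, hb⟩ := by
      intro d
      induction d with
      | zero => intro av hb h0; omega
      | succ p ih =>
        intro av hb _
        have hlast : w ⟨av + p, by omega⟩ < w ⟨av + p + 1, by omega⟩ := h (av + p) (by omega)
        by_cases hp : p = 0
        · subst hp; simpa using hlast
        · exact (ih av (by omega) (by omega)).trans hlast
    intro a b hab
    rw [Fin.lt_def] at hab
    have := key ((b : ℕ) - (a : ℕ)) (a : ℕ) (by omega) (by omega)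
    have e1 : (⟨(a : ℕ), by omega⟩ : Fin n) = a := by exact Fin.ext rfl
    have e2 : (⟨(a : ℕ) + ((b : ℕ) - (a : ℕ)), by omega⟩ : Fin n) = b := Fin.ext (by simp; omega)
    rwa [e1, e2] at this
  have hmono' : StrictMono (w⁻¹ : Equiv.Perm (Fin n)) := by
    intro a b hab
    rcases lt_trichotomy (w⁻¹ a) (w⁻¹ b) with h' | h' | h'
    · exact h'
    · exact absurd (by rw [← (show w (w⁻¹ a) = a by simp), ← (show w (w⁻¹ b) = b by simp), h']) (ne_of_lt hab)
    · have := hmono h'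
      simp only [show ∀ x, w (w⁻¹ x) = x by simp] at this
      exact absurd hab (not_lt.mpr this.le)
  ext x
  have h1 := le_apply_of_strictMono w hmono x
  have h2 := le_apply_of_strictMono (w⁻¹ : Equiv.Perm (Fin n)) hmono' (w x)
  simp only [show ∀ x, w⁻¹ (w x) = x by simp] at h2
  simp only [Equiv.Perm.one_apply]
  exact le_antisymm h2 h1

end BP
namespace BP
open Finset Equiv

variable {n : ℕ}

lemma exists_word (w : Equiv.Perm (Fin n)) :
    ∃ l, IsWord n w l ∧ l.length = (invSet w).card := by
  generalize hN : (invSet w).card = N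
  induction N using Nat.strong_induction_on generalizing w with
  | _ N ih =>
    by_cases hw : w = 1
    · refine ⟨[], ⟨by simp, by simp [hw]⟩, ?_⟩
      rw [← hN, hw, invSet_one]
      simp
    · have : ∃ (k : ℕ) (hk : k + 1 < n), w ⟨k + 1, hk⟩ < w ⟨k, Nat.lt_of_succ_lt hk⟩ := by
        by_contra hc
        push_neg at hc
        apply hw
        apply eq_one_of_no_descent
        intro k hk
        have h1 := hc k hk
        rcases lt_trichotomy (w ⟨k, Nat.lt_of_succ_lt hk⟩) (w ⟨k + 1, hk⟩) with h | h | h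
        · exact h
        · exact absurd (w.injective h) (by simp [Fin.ext_iff])
        · exact absurd h (not_lt.mpr h1)
      obtain ⟨k, hk, hdesc⟩ := this
      have hstep := inv_mul_adj_descent hk w hdesc
      rw [hN] at hstep
      obtain ⟨l', ⟨hval', hprod'⟩, hlen'⟩ := ih (invSet (w * adjTransposition n k)).card
        (by omega) (w * adjTransposition n k) rfl
      refine ⟨l' ++ [k], ⟨?_, ?_⟩, ?_⟩
      · intro x hx
        rcases List.mem_append.mp hx with h | h
        · exact hval' x h
        · simp at h; omega
      · rw [List.map_append, List.prod_append]
        simp only [List.map_cons, List.map_nil, List.prod_cons, List.prod_nil, mul_one]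
        rw [← hprod', mul_assoc, adj_mul_self, mul_one]
      · simp only [List.length_append, List.length_cons, List.length_nil]
        omega

lemma length_ge (w : Equiv.Perm (Fin n)) (l : List ℕ) (h : IsWord n w l) :
    (invSet w).card ≤ l.length := by
  induction l generalizing w with
  | nil =>
    obtain ⟨_, hprod⟩ := h
    simp only [List.map_nil, List.prod_nil] at hprod
    rw [hprod, invSet_one]
    simp
  | cons k rest ih =>
    obtain ⟨hval, hprod⟩ := h
    have hk : k + 1 < n := hval k (by simp)
    set v := (rest.map (adjTransposition n)).prod with hv
    have hword : IsWord n v rest := ⟨fun x hx => hval x (by simp [hx]), rfl⟩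
    have hrec := ih v hword
    simp only [List.map_cons, List.prod_cons] at hprod
    -- invSet w ≤ invSet v + 1
    have hkey : (invSet w).card ≤ (invSet v).card + 1 := by
      have hwinv : w⁻¹ = v⁻¹ * adjTransposition n k := by
        rw [hprod, mul_inv_rev, adj_inv]
      rw [← inv_inv_card w, hwinv]
      rcases lt_trichotomy ((v⁻¹ : Equiv.Perm (Fin n)) ⟨k, Nat.lt_of_succ_lt hk⟩)
          ((v⁻¹ : Equiv.Perm (Fin n)) ⟨k + 1, hk⟩) with hcase | hcase | hcase
      · rw [inv_mul_adj_ascent hk _ hcase, inv_inv_card]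
      · exact absurd ((v⁻¹ : Equiv.Perm (Fin n)).injective hcase) (by simp [Fin.ext_iff])
      · have := inv_mul_adj_descent hk _ hcase
        rw [inv_inv_card] at this
        omega
    simp only [List.length_cons]
    omega

end BP
namespace BP
open Finset Equiv

variable {n : ℕ}

lemma reduced_length (w : Equiv.Perm (Fin n)) (l : List ℕ) (h : IsReducedWord n w l) :
    l.length = (invSet w).card := by
  obtain ⟨l₀, hw₀, hlen₀⟩ := exists_word w
  have h1 := h.2 l₀ hw₀
  have h2 := length_ge w l h.1
  omega

lemma exists_reduced (w : Equiv.Perm (Fin n)) : ∃ l, IsReducedWord n w l := by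
  obtain ⟨l₀, hw₀, hlen₀⟩ := exists_word w
  exact ⟨l₀, hw₀, fun l' h' => by have := length_ge w l' h'; omega⟩

def mSet (w : Equiv.Perm (Fin n)) (i : ℕ) : Finset (Fin n) :=
  Finset.univ.filter (fun j => (j : ℕ) ≤ i ∧ i < (w j : ℕ))

lemma mSet_one (i : ℕ) : mSet (1 : Equiv.Perm (Fin n)) i = ∅ := by
  ext j
  simp only [mSet, Finset.mem_filter]
  simp only [mSet, Finset.mem_filter, Finset.mem_univ, true_and, Finset.notMem_empty,
    iff_false, Equiv.Perm.one_apply]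
  omega

lemma mSet_mul_ne {k i : ℕ} (hk : k + 1 < n) (hik : i ≠ k) (v : Equiv.Perm (Fin n)) :
    mSet (adjTransposition n k * v) i = mSet v i := by
  ext j
  simp only [mSet, Finset.mem_filter]
  simp only [mSet, Finset.mem_filter, Finset.mem_univ, true_and, Equiv.Perm.mul_apply]
  have hval := adj_val hk (v j)
  split_ifs at hval <;> omega

lemma mSet_mul_le {k : ℕ} (hk : k + 1 < n) (v : Equiv.Perm (Fin n)) :
    (mSet (adjTransposition n k * v) k).card ≤ (mSet v k).card + 1 := by
  have hsub : mSet (adjTransposition n k * v) k ⊆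
      insert (v⁻¹ ⟨k, Nat.lt_of_succ_lt hk⟩) (mSet v k) := by
    intro j hj
    simp only [mSet, Finset.mem_filter] at hj
    simp only [mSet, Finset.mem_filter, Finset.mem_univ, true_and,
      Equiv.Perm.mul_apply] at hj
    have hval := adj_val hk (v j)
    simp only [Finset.mem_insert, mSet, Finset.mem_filter, Finset.mem_univ, true_and]
    by_cases hc : (v j : ℕ) = k
    · left
      have : v j = ⟨k, Nat.lt_of_succ_lt hk⟩ := Fin.ext hc
      rw [← this]; simp
    · right
      split_ifs at hval <;> omega
  calc (mSet (adjTransposition n k * v) k).card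
      ≤ (insert (v⁻¹ ⟨k, Nat.lt_of_succ_lt hk⟩) (mSet v k)).card := Finset.card_le_card hsub
    _ ≤ (mSet v k).card + 1 := Finset.card_insert_le _ _

lemma count_ge_m (l : List ℕ) (w : Equiv.Perm (Fin n)) (h : IsWord n w l) (i : ℕ) :
    (mSet w i).card ≤ l.count i := by
  induction l generalizing w with
  | nil =>
    obtain ⟨_, hprod⟩ := h
    simp only [List.map_nil, List.prod_nil] at hprod
    simp [hprod, mSet_one]
  | cons k rest ih =>
    obtain ⟨hval, hprod⟩ := h
    have hk : k + 1 < n := hval k (by simp)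
    set v := (rest.map (adjTransposition n)).prod with hv
    have hrec := ih v ⟨fun x hx => hval x (by simp [hx]), rfl⟩
    simp only [List.map_cons, List.prod_cons] at hprod
    rw [← hv] at hprod
    rw [List.count_cons]
    by_cases hik : i = k
    · subst hik
      have := mSet_mul_le hk v
      rw [hprod]
      simp only [beq_self_eq_true, if_true]
      omega
    · rw [hprod, mSet_mul_ne hk hik]
      rw [if_neg (by simp only [beq_iff_eq]; omega)]
      omega

end BP
namespace BP
open Finset Equiv

variable {n : ℕ}

lemma card_filter_lt (w : Equiv.Perm (Fin n)) (c : Fin n) :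
    (Finset.univ.filter fun j => w j < c).card = (c : ℕ) := by
  rw [← Fin.card_Iio (b := c)]
  apply Finset.card_nbij' (i := fun j => w j) (j := fun x => w⁻¹ x)
  · intro j hj
    simp only [Finset.mem_coe, Finset.mem_filter, Finset.mem_univ, true_and] at hj
    simpa using hj
  · intro x hx
    simp only [Finset.coe_Iio, Set.mem_Iio] at hx
    simp only [Finset.mem_coe, Finset.mem_filter, Finset.mem_univ, true_and]
    simpa using hx
  · intro j _; simp
  · intro x _; simp

lemma card_filter_le (w : Equiv.Perm (Fin n)) (c : Fin n) :
    (Finset.univ.filter fun j => w j ≤ c).card = (c : ℕ) + 1 := by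
  rw [← Fin.card_Iic (b := c)]
  apply Finset.card_nbij' (i := fun j => w j) (j := fun x => w⁻¹ x)
  · intro j hj
    simp only [Finset.mem_coe, Finset.mem_filter, Finset.mem_univ, true_and] at hj
    simpa using hj
  · intro x hx
    simp only [Finset.coe_Iic, Set.mem_Iic] at hx
    simp only [Finset.mem_coe, Finset.mem_filter, Finset.mem_univ, true_and]
    simpa using hx
  · intro j _; simp
  · intro x _; simp

lemma contains_of_3 {w : Equiv.Perm (Fin n)} {x y z : Fin n} (h1 : x < y) (h2 : y < z)
    (v1 : w z < w y) (v2 : w y < w x) : ContainsPattern w [3, 2, 1] := by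
  have h3 := h1.trans h2
  have V1 : ((w z : Fin n) : ℕ) < ((w y : Fin n) : ℕ) := v1
  have V2 : ((w y : Fin n) : ℕ) < ((w x : Fin n) : ℕ) := v2
  refine ⟨fun t => if (t : ℕ) = 0 then x else if (t : ℕ) = 1 then y else z, ?_, ?_⟩
  · intro a b hab
    have hab' : (a : ℕ) < (b : ℕ) := hab
    have hb : (b : ℕ) < 3 := b.isLt
    dsimp only
    split_ifs <;> first | assumption | omega
  · have hget : ∀ t : Fin 3, ([3, 2, 1].get t = if (t : ℕ) = 0 then 3
        else if (t : ℕ) = 1 then 2 else 1) := by decide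
    intro a b
    rw [hget a, hget b]
    dsimp only
    split_ifs <;> simp only [Fin.lt_def] <;> omega

lemma contains_of_4 {w : Equiv.Perm (Fin n)} {a b c d : Fin n}
    (h1 : a < b) (h2 : b < c) (h3 : c < d)
    (v1 : w c < w d) (v2 : w d < w a) (v3 : w a < w b) :
    ContainsPattern w [3, 4, 1, 2] := by
  have h4 := h1.trans h2
  have h5 := h2.trans h3
  have h6 := h1.trans h5
  have V1 : ((w c : Fin n) : ℕ) < ((w d : Fin n) : ℕ) := v1
  have V2 : ((w d : Fin n) : ℕ) < ((w a : Fin n) : ℕ) := v2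
  have V3 : ((w a : Fin n) : ℕ) < ((w b : Fin n) : ℕ) := v3
  refine ⟨fun t => if (t : ℕ) = 0 then a else if (t : ℕ) = 1 then b
    else if (t : ℕ) = 2 then c else d, ?_, ?_⟩
  · intro i j hij
    have hij' : (i : ℕ) < (j : ℕ) := hij
    have hj : (j : ℕ) < 4 := j.isLt
    dsimp only
    split_ifs <;> first | assumption | omega
  · have hget : ∀ t : Fin 4, ([3, 4, 1, 2].get t = if (t : ℕ) = 0 then 3
        else if (t : ℕ) = 1 then 4 else if (t : ℕ) = 2 then 1 else 2) := by decide
    intro i j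
    rw [hget i, hget j]
    dsimp only
    split_ifs <;> simp only [Fin.lt_def] <;> omega

end BP
namespace BP
open Finset Equiv

variable {n : ℕ}

lemma inv_card_eq_sum (w : Equiv.Perm (Fin n)) :
    (invSet w).card = ∑ a : Fin n, (Finset.univ.filter fun b => a < b ∧ w b < w a).card := by
  rw [invSet, Finset.card_filter, Fintype.sum_prod_type]
  congr 1
  ext a
  rw [Finset.card_filter]

lemma sum_m_eq (w : Equiv.Perm (Fin n)) :
    ∑ i ∈ Finset.range n, (mSet w i).card = ∑ j : Fin n, ((w j : ℕ) - (j : ℕ)) := by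
  simp only [mSet, Finset.card_filter]
  rw [Finset.sum_comm]
  congr 1
  ext j
  rw [← Finset.card_filter]
  have heq : Finset.filter (fun i => (j : ℕ) ≤ i ∧ i < ((w j : Fin n) : ℕ)) (Finset.range n)
      = Finset.Ico (j : ℕ) ((w j : Fin n) : ℕ) := by
    ext i
    simp only [Finset.mem_filter, Finset.mem_range, Finset.mem_Ico]
    have := (w j).isLt
    omega
  rw [heq, Nat.card_Ico]

lemma inv_le_sum_m (w : Equiv.Perm (Fin n)) (hav : ¬ ContainsPattern w [3, 2, 1]) :
    (invSet w).card ≤ ∑ i ∈ Finset.range n, (mSet w i).card := by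
  rw [inv_card_eq_sum, sum_m_eq]
  apply Finset.sum_le_sum
  intro a _
  by_cases hne : (Finset.univ.filter fun b => a < b ∧ w b < w a).Nonempty
  · obtain ⟨b, hb⟩ := hne
    simp only [Finset.mem_filter, Finset.mem_univ, true_and] at hb
    have H : ∀ x, x < a → w x < w a := by
      intro x hx
      rcases lt_trichotomy (w x) (w a) with h | h | h
      · exact h
      · exact absurd (w.injective h) (ne_of_lt hx)
      · exact absurd (contains_of_3 hx hb.1 hb.2 h) hav
    set S := Finset.univ.filter (fun j => w j < w a) with hS
    have hV : S.card = ((w a : Fin n) : ℕ) := card_filter_lt w (w a)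
    have hsplit := Finset.card_filter_add_card_filter_not
      (s := S) (p := fun j => a < j)
    have hS2 : S.filter (fun j => ¬ a < j) = Finset.univ.filter (fun j => j < a) := by
      ext j
      simp only [hS, Finset.filter_filter, Finset.mem_filter, Finset.mem_univ, true_and,
        not_lt]
      constructor
      · rintro ⟨h1, h2⟩
        rcases lt_or_eq_of_le h2 with h | h
        · exact h
        · exact absurd (congrArg w h) (ne_of_lt h1)
      · intro h
        exact ⟨H j h, h.le⟩
    have hS2card : (S.filter (fun j => ¬ a < j)).card = (a : ℕ) := by
      rw [hS2]
      have := card_filter_lt (1 : Equiv.Perm (Fin n)) a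
      exact this
    have hS1 : Finset.univ.filter (fun b => a < b ∧ w b < w a) = S.filter (fun j => a < j) := by
      ext j
      simp only [hS, Finset.filter_filter, Finset.mem_filter, Finset.mem_univ, true_and]
      tauto
    rw [hS1]
    omega
  · rw [Finset.not_nonempty_iff_eq_empty.mp hne]
    simp

lemma m_le_one (w : Equiv.Perm (Fin n)) (hav1 : ¬ ContainsPattern w [3, 2, 1])
    (hav2 : ¬ ContainsPattern w [3, 4, 1, 2]) (i : ℕ) (hi : i < n) :
    (mSet w i).card ≤ 1 := by
  by_contra hcon
  push_neg at hcon
  set A := mSet w i with hA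
  set B := Finset.univ.filter (fun j : Fin n => i < (j : ℕ) ∧ ((w j : Fin n) : ℕ) ≤ i) with hB
  -- card A = card B
  have c1 : (Finset.univ.filter fun j : Fin n => ((w j : Fin n) : ℕ) ≤ i).card = i + 1 := by
    have := card_filter_le w ⟨i, hi⟩
    simpa [Fin.le_def] using this
  have c2 : (Finset.univ.filter fun j : Fin n => (j : ℕ) ≤ i).card = i + 1 := by
    have := card_filter_le (1 : Equiv.Perm (Fin n)) ⟨i, hi⟩
    simpa [Fin.le_def] using this
  have s1 := Finset.card_filter_add_card_filter_not
    (s := Finset.univ.filter fun j : Fin n => ((w j : Fin n) : ℕ) ≤ i)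
    (p := fun j => (j : ℕ) ≤ i)
  have s2 := Finset.card_filter_add_card_filter_not
    (s := Finset.univ.filter fun j : Fin n => (j : ℕ) ≤ i)
    (p := fun j => ((w j : Fin n) : ℕ) ≤ i)
  have e1 : ((Finset.univ.filter fun j : Fin n => ((w j : Fin n) : ℕ) ≤ i).filter
      (fun j : Fin n => ¬ (j : ℕ) ≤ i)) = B := by
    ext j
    simp only [hB, Finset.filter_filter, Finset.mem_filter, Finset.mem_univ, true_and, not_le]
    tauto
  have e2 : ((Finset.univ.filter fun j : Fin n => (j : ℕ) ≤ i).filter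
      (fun j : Fin n => ¬ ((w j : Fin n) : ℕ) ≤ i)) = A := by
    ext j
    simp only [hA, mSet, Finset.filter_filter, Finset.mem_filter, Finset.mem_univ, true_and,
      not_le]
    try tauto
  have e3 : ((Finset.univ.filter fun j : Fin n => ((w j : Fin n) : ℕ) ≤ i).filter
      (fun j : Fin n => (j : ℕ) ≤ i)) = ((Finset.univ.filter fun j : Fin n => (j : ℕ) ≤ i).filter
      (fun j : Fin n => ((w j : Fin n) : ℕ) ≤ i)) := by
    ext j
    simp only [Finset.filter_filter, Finset.mem_filter, Finset.mem_univ, true_and]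
    tauto
  have hBcard : 2 ≤ B.card := by
    rw [e1] at s1; rw [e2] at s2; rw [e3] at s1
    omega
  -- extract ordered pairs
  have extract : ∀ (C : Finset (Fin n)), 2 ≤ C.card → ∃ x y, x ∈ C ∧ y ∈ C ∧ x < y := by
    intro C hC
    obtain ⟨x, hx, y, hy, hne⟩ := Finset.one_lt_card.mp hC
    rcases lt_or_gt_of_ne hne with h | h
    · exact ⟨x, y, hx, hy, h⟩
    · exact ⟨y, x, hy, hx, h⟩
  obtain ⟨j1, j2, hj1, hj2, hj12⟩ := extract A hcon
  obtain ⟨k1, k2, hk1, hk2, hk12⟩ := extract B hBcard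
  simp only [hA, mSet, Finset.mem_filter, Finset.mem_univ, true_and] at hj1 hj2
  simp only [hB, Finset.mem_filter, Finset.mem_univ, true_and] at hk1 hk2
  have hj2k1 : j2 < k1 := by rw [Fin.lt_def]; omega
  have hwk1j2 : w k1 < w j2 := by rw [Fin.lt_def]; omega
  rcases lt_or_gt_of_ne (fun h : w j1 = w j2 => (ne_of_lt hj12) (w.injective h)) with hv | hv
  · rcases lt_or_gt_of_ne (fun h : w k1 = w k2 => (ne_of_lt hk12) (w.injective h)) with hu | hu
    · -- 3412 at j1 j2 k1 k2
      have hwk2j1 : w k2 < w j1 := by rw [Fin.lt_def]; omega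
      exact absurd (contains_of_4 hj12 hj2k1 hk12 hu hwk2j1 hv) hav2
    · -- 321 at j2 k1 k2
      exact absurd (contains_of_3 hj2k1 hk12 hu hwk1j2) hav1
  · -- 321 at j1 j2 k1
    exact absurd (contains_of_3 hj12 hj2k1 hwk1j2 hv) hav1

end BP
namespace BP
open Finset Equiv

variable {n : ℕ}

lemma one_avoids {P : List ℕ} (x y : Fin P.length) (hxy : x < y)
    (hv : ¬ P.get x < P.get y) : ¬ ContainsPattern (1 : Equiv.Perm (Fin n)) P := by
  rintro ⟨f, hm, hf⟩
  exact hv ((hf x y).mp (by simpa using hm hxy))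

def Bdry (v : Equiv.Perm (Fin n)) (k : ℕ) : Prop :=
  ∀ j : Fin n, ((v j : Fin n) : ℕ) ≤ k ↔ (j : ℕ) ≤ k

lemma bdry_prod (k : ℕ) (l : List ℕ) (hval : ∀ m ∈ l, m + 1 < n) (hk : k ∉ l) :
    Bdry ((l.map (adjTransposition n)).prod) k := by
  induction l with
  | nil => intro j; simp
  | cons m rest ih =>
    have hm : m + 1 < n := hval m (by simp)
    have hmk : m ≠ k := by intro h; exact hk (by simp [h])
    intro j
    simp only [List.map_cons, List.prod_cons, Equiv.Perm.mul_apply]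
    set v := (rest.map (adjTransposition n)).prod with hv
    have h1 := adj_val hm (v j)
    have h2 := (ih (fun x hx => hval x (by simp [hx])) (fun h => hk (by simp [h]))) j
    split_ifs at h1 <;> omega

lemma bdry_push {k : ℕ} (hk : k + 1 < n) {v : Equiv.Perm (Fin n)} (hbd : Bdry v k)
    (j : Fin n) :
    ((((adjTransposition n k * v) j : Fin n) : ℕ) < k → (j : ℕ) ≤ k) ∧
    (k + 1 < (((adjTransposition n k * v) j : Fin n) : ℕ) → k < (j : ℕ)) := by
  have h1 := adj_val hk (v j)
  have h2 := hbd j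
  simp only [Equiv.Perm.mul_apply]
  constructor <;> intro h <;> (split_ifs at h1 <;> omega)

lemma step_avoid {P : List ℕ}
    (hP : ∀ (T : Fin P.length → Bool) (xp xq : Fin P.length),
      (∀ z z' : Fin P.length, z ≤ z' → T z' = true → T z = true) →
      T xp = true → T xq = false →
      (∀ z, ¬(P.get xq < P.get z ∧ P.get z < P.get xp)) →
      (∀ z, P.get z < P.get xq → T z = true) →
      (∀ z, P.get xp < P.get z → T z = false) → False)
    {k : ℕ} (hk : k + 1 < n) {v : Equiv.Perm (Fin n)} (hbd : Bdry v k)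
    (hv : ¬ ContainsPattern v P) : ¬ ContainsPattern (adjTransposition n k * v) P := by
  rintro ⟨f, hm, hf⟩
  by_cases hpq : (∃ xp, ((v (f xp) : Fin n) : ℕ) = k) ∧ (∃ xq, ((v (f xq) : Fin n) : ℕ) = k + 1)
  · obtain ⟨⟨xp, hxp⟩, ⟨xq, hxq⟩⟩ := hpq
    have wxp : (((adjTransposition n k * v) (f xp) : Fin n) : ℕ) = k + 1 := by
      rw [Equiv.Perm.mul_apply, adj_val hk, if_pos hxp]
    have wxq : (((adjTransposition n k * v) (f xq) : Fin n) : ℕ) = k := by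
      rw [Equiv.Perm.mul_apply, adj_val hk, if_neg (by omega), if_pos hxq]
    refine hP (fun z => decide ((f z : ℕ) ≤ k)) xp xq ?_ ?_ ?_ ?_ ?_ ?_
    · intro z z' hzz hT
      simp only [decide_eq_true_eq] at hT ⊢
      exact le_trans (Fin.le_def.mp (hm.monotone hzz)) hT
    · simp only [decide_eq_true_eq]
      exact (hbd (f xp)).mp (by omega)
    · simp only [decide_eq_false_iff_not]
      intro h
      have := (hbd (f xq)).mpr h
      omega
    · rintro z ⟨hz1, hz2⟩
      have a1 := (hf xq z).mpr hz1
      have a2 := (hf z xp).mpr hz2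
      rw [Fin.lt_def] at a1 a2
      omega
    · intro z hz
      have a1 := (hf z xq).mpr hz
      rw [Fin.lt_def] at a1
      have hb := (bdry_push hk hbd (f z)).1 (by omega)
      simpa using hb
    · intro z hz
      have a1 := (hf xp z).mpr hz
      rw [Fin.lt_def] at a1
      have hb := (bdry_push hk hbd (f z)).2 (by omega)
      simp only [decide_eq_false_iff_not]
      omega
  · apply hv
    refine ⟨f, hm, fun a b => ?_⟩
    rw [← hf a b]
    rw [Equiv.Perm.mul_apply, Equiv.Perm.mul_apply]
    refine (adj_lt_iff hk ?_ ?_).symm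
    · rintro ⟨ha, hb2⟩; exact hpq ⟨⟨a, ha⟩, ⟨b, hb2⟩⟩
    · rintro ⟨ha, hb2⟩; exact hpq ⟨⟨b, hb2⟩, ⟨a, ha⟩⟩

lemma cert321 :
    ∀ (T : Fin 3 → Bool) (xp xq : Fin 3),
      (∀ z z', z ≤ z' → T z' = true → T z = true) →
      T xp = true → T xq = false →
      (∀ z, ¬(([3, 2, 1] : List ℕ).get xq < ([3, 2, 1] : List ℕ).get z ∧
        ([3, 2, 1] : List ℕ).get z < ([3, 2, 1] : List ℕ).get xp)) →
      (∀ z, ([3, 2, 1] : List ℕ).get z < ([3, 2, 1] : List ℕ).get xq → T z = true) →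
      (∀ z, ([3, 2, 1] : List ℕ).get xp < ([3, 2, 1] : List ℕ).get z → T z = false) →
      False := by decide

lemma cert3412 :
    ∀ (T : Fin 4 → Bool) (xp xq : Fin 4),
      (∀ z z', z ≤ z' → T z' = true → T z = true) →
      T xp = true → T xq = false →
      (∀ z, ¬(([3, 4, 1, 2] : List ℕ).get xq < ([3, 4, 1, 2] : List ℕ).get z ∧
        ([3, 4, 1, 2] : List ℕ).get z < ([3, 4, 1, 2] : List ℕ).get xp)) →
      (∀ z, ([3, 4, 1, 2] : List ℕ).get z < ([3, 4, 1, 2] : List ℕ).get xq → T z = true) →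
      (∀ z, ([3, 4, 1, 2] : List ℕ).get xp < ([3, 4, 1, 2] : List ℕ).get z → T z = false) →
      False := by decide

lemma nodup_prod_avoids (l : List ℕ) (hval : ∀ m ∈ l, m + 1 < n) (hnd : l.Nodup) :
    ¬ ContainsPattern ((l.map (adjTransposition n)).prod) [3, 2, 1] ∧
    ¬ ContainsPattern ((l.map (adjTransposition n)).prod) [3, 4, 1, 2] := by
  induction l with
  | nil =>
    simp only [List.map_nil, List.prod_nil]
    exact ⟨one_avoids (P := [3,2,1]) (0 : Fin 3) (1 : Fin 3) (by decide) (by decide),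
      one_avoids (P := [3,4,1,2]) (0 : Fin 4) (2 : Fin 4) (by decide) (by decide)⟩
  | cons m rest ih =>
    have hm : m + 1 < n := hval m (by simp)
    obtain ⟨hnm, hndrest⟩ := List.nodup_cons.mp hnd
    obtain ⟨ih1, ih2⟩ := ih (fun x hx => hval x (by simp [hx])) hndrest
    have hbd : Bdry ((rest.map (adjTransposition n)).prod) m :=
      bdry_prod m rest (fun x hx => hval x (by simp [hx])) hnm
    simp only [List.map_cons, List.prod_cons]
    exact ⟨step_avoid (P := [3,2,1]) cert321 hm hbd ih1, step_avoid (P := [3,4,1,2]) cert3412 hm hbd ih2⟩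

end BP
namespace BP
open Finset Equiv

variable {n : ℕ}

lemma sum_count (l : List ℕ) (h : ∀ m ∈ l, m + 1 < n) :
    ∑ i ∈ Finset.range n, l.count i = l.length := by
  induction l with
  | nil => simp
  | cons m rest ih =>
    have hm : m + 1 < n := h m (by simp)
    simp only [List.count_cons, List.length_cons]
    rw [Finset.sum_add_distrib, ih (fun x hx => h x (by simp [hx]))]
    congr 1
    simp only [beq_iff_eq]
    rw [Finset.sum_ite_eq (Finset.range n) m (fun _ => 1)]
    rw [if_pos (Finset.mem_range.mpr (by omega))]

end BP


/-- `w` is boolean (every reduced word has pairwise distinct letters)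
iff `w` avoids 321 and 3412. -/
theorem boolean_iff_avoids (n : ℕ) (w : Equiv.Perm (Fin n)) :
    (∀ l, IsReducedWord n w l → l.Nodup) ↔
      ¬ ContainsPattern w [3, 2, 1] ∧ ¬ ContainsPattern w [3, 4, 1, 2] := by
  constructor
  · intro hb
    obtain ⟨l, hred⟩ := BP.exists_reduced w
    have hnd := hb l hred
    have hres := BP.nodup_prod_avoids l hred.1.1 hnd
    rwa [← hred.1.2] at hres
  · rintro ⟨h1, h2⟩ l hl
    have hlen : l.length = (BP.invSet w).card := BP.reduced_length w l hl
    have hcnt : ∀ i, (BP.mSet w i).card ≤ l.count i := fun i => BP.count_ge_m l w hl.1 i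
    have hsc : ∑ i ∈ Finset.range n, l.count i = l.length := BP.sum_count l hl.1.1
    have hle := BP.inv_le_sum_m w h1
    have hsum_eq : ∑ i ∈ Finset.range n, (BP.mSet w i).card
        = ∑ i ∈ Finset.range n, l.count i := by
      refine le_antisymm (Finset.sum_le_sum fun i _ => hcnt i) ?_
      rw [hsc, hlen]
      exact hle
    have hptw := (Finset.sum_eq_sum_iff_of_le (fun i _ => hcnt i)).mp hsum_eq
    rw [List.nodup_iff_count_le_one]
    intro a
    by_cases ha : a < n
    · rw [← hptw a (Finset.mem_range.mpr ha)]
      exact BP.m_le_one w h1 h2 a ha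
    · have hnm : a ∉ l := fun hc => ha (by have := hl.1.1 a hc; omega)
      simp [List.count_eq_zero_of_not_mem hnm]
end

section
/- Let w be a permutation of {1,…,n} avoiding the patterns 321 and 3412, and suppose w(k) > w(k+1) for some 1 ≤ k ≤ n−1. Then: (i) for all i, j with i ≤ k < j, (w·s_k)(i) < (w·s_k)(j); and (ii) w·s_k also avoids the patterns 321 and 3412. -/
lemma contains321_iff {n : ℕ} (w : Equiv.Perm (Fin n)) :
    ContainsPattern w [3, 2, 1] ↔
      ∃ a b c : Fin n, a < b ∧ b < c ∧ w c < w b ∧ w b < w a := by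
  constructor
  · rintro ⟨f, hf, hiff⟩
    exact ⟨f ⟨0, by norm_num⟩, f ⟨1, by norm_num⟩, f ⟨2, by norm_num⟩,
      hf (by decide), hf (by decide),
      (hiff ⟨2, by norm_num⟩ ⟨1, by norm_num⟩).2 (by decide),
      (hiff ⟨1, by norm_num⟩ ⟨0, by norm_num⟩).2 (by decide)⟩
  · rintro ⟨a, b, c, hab, hbc, h1, h2⟩
    have k1 : w c < w a := h1.trans h2
    refine ⟨![a, b, c], ?_, ?_⟩
    · intro i j hij
      fin_cases i <;> fin_cases j <;> simp_all <;>
        first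
          | exact hab | exact hbc | exact hab.trans hbc
    · intro i j
      fin_cases i <;> fin_cases j <;>
        simp only [Matrix.cons_val_zero, Matrix.cons_val_one, Matrix.head_cons,
          Matrix.cons_val_two, Matrix.tail_cons, List.get] <;>
        norm_num <;>
        first
          | exact h1 | exact h2 | exact k1
          | exact h1.le | exact h2.le | exact k1.le

lemma contains3412_iff {n : ℕ} (w : Equiv.Perm (Fin n)) :
    ContainsPattern w [3, 4, 1, 2] ↔
      ∃ a b c d : Fin n, a < b ∧ b < c ∧ c < d ∧
        w c < w d ∧ w d < w a ∧ w a < w b := by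
  constructor
  · rintro ⟨f, hf, hiff⟩
    exact ⟨f ⟨0, by norm_num⟩, f ⟨1, by norm_num⟩, f ⟨2, by norm_num⟩, f ⟨3, by norm_num⟩,
      hf (by decide), hf (by decide), hf (by decide),
      (hiff ⟨2, by norm_num⟩ ⟨3, by norm_num⟩).2 (by decide),
      (hiff ⟨3, by norm_num⟩ ⟨0, by norm_num⟩).2 (by decide),
      (hiff ⟨0, by norm_num⟩ ⟨1, by norm_num⟩).2 (by decide)⟩
  · rintro ⟨a, b, c, d, hab, hbc, hcd, h1, h2, h3⟩
    have k1 : w c < w a := h1.trans h2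
    have k2 : w d < w b := h2.trans h3
    have k3 : w c < w b := k1.trans h3
    refine ⟨![a, b, c, d], ?_, ?_⟩
    · intro i j hij
      fin_cases i <;> fin_cases j <;> simp_all <;>
        first
          | exact hab | exact hbc | exact hcd
          | exact hab.trans hbc | exact hbc.trans hcd
          | exact (hab.trans hbc).trans hcd
    · intro i j
      fin_cases i <;> fin_cases j <;>
        simp only [Matrix.cons_val_zero, Matrix.cons_val_one, Matrix.head_cons,
          Matrix.cons_val_two, Matrix.tail_cons, Matrix.cons_val_three, List.get] <;>
        norm_num <;>
        first
          | exact h1 | exact h2 | exact h3 | exact k1 | exact k2 | exact k3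
          | exact h1.le | exact h2.le | exact h3.le
          | exact k1.le | exact k2.le | exact k3.le

/-- if `w` avoids 321 and 3412 and has a descent at `k` (0-indexed), then
`w·s_k` has no inversion across position `k`, and `w·s_k` still avoids 321 and 3412. -/
theorem descent_step_avoids (n k : ℕ) (hk : k + 1 < n) (w : Equiv.Perm (Fin n))
    (h1 : ¬ ContainsPattern w [3, 2, 1]) (h2 : ¬ ContainsPattern w [3, 4, 1, 2])
    (hdesc : w ⟨k + 1, hk⟩ < w ⟨k, Nat.lt_of_succ_lt hk⟩) :
    (∀ i j : Fin n, (i : ℕ) ≤ k → k < (j : ℕ) →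
        (w * adjTransposition n k) i < (w * adjTransposition n k) j) ∧
      ¬ ContainsPattern (w * adjTransposition n k) [3, 2, 1] ∧
        ¬ ContainsPattern (w * adjTransposition n k) [3, 4, 1, 2] := by
  set K : Fin n := ⟨k, Nat.lt_of_succ_lt hk⟩ with hKdef
  set K1 : Fin n := ⟨k + 1, hk⟩ with hK1def
  have hs : adjTransposition n k = Equiv.swap K K1 := by
    simp [adjTransposition, hk]; rfl
  have happ : ∀ i : Fin n, (w * adjTransposition n k) i =
      if i = K then w K1 else if i = K1 then w K else w i := by
    intro i
    rw [Equiv.Perm.mul_apply, hs, Equiv.swap_apply_def]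
    split_ifs <;> rfl
  have hKK1 : K < K1 := Fin.lt_def.2 (Nat.lt_succ_self k)
  have hne : ∀ x y : Fin n, x ≠ y → w x ≠ w y := fun x y h e => h (w.injective e)
  have part1 : ∀ i j : Fin n, (i : ℕ) ≤ k → k < (j : ℕ) →
      (w * adjTransposition n k) i < (w * adjTransposition n k) j := by
    intro i j hi hj
    have hiK1 : i ≠ K1 := fun h => by
      rw [h] at hi; simp [hK1def] at hi
    have hjK : j ≠ K := fun h => by
      rw [h] at hj; simp [hKdef] at hj
    rw [happ i, happ j]
    by_cases hiK : i = K <;> by_cases hjK1 : j = K1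
    · rw [if_pos hiK, if_neg (by rw [hjK1]; exact Ne.symm (Fin.ne_of_lt hKK1)), if_pos hjK1]
      exact hdesc
    · -- i = K, j ≠ K1 : goal w K1 < w j
      rw [if_pos hiK, if_neg hjK, if_neg hjK1]
      by_contra hcon
      have hjlt : w j < w K1 := lt_of_le_of_ne (not_lt.1 hcon) (hne j K1 hjK1)
      have hK1j : K1 < j := by
        rw [Fin.lt_def]; simp only [hK1def]
        rcases Nat.lt_or_ge (k+1) (j:ℕ) with h | h
        · exact h
        · exfalso; apply hjK1; apply Fin.ext; simp [hK1def]; omega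
      exact h1 ((contains321_iff w).2 ⟨K, K1, j, hKK1, hK1j, hjlt, hdesc⟩)
    · -- i ≠ K, j = K1 : goal w i < w K
      rw [if_neg hiK, if_neg hiK1, if_neg (by rw [hjK1]; exact Ne.symm (Fin.ne_of_lt hKK1)), if_pos hjK1]
      by_contra hcon
      have hwKi : w K < w i := lt_of_le_of_ne (not_lt.1 hcon) (hne K i (Ne.symm hiK))
      have hiKlt : i < K := by
        rw [Fin.lt_def]; simp only [hKdef]
        rcases Nat.lt_or_ge (i:ℕ) k with h | h
        · exact h
        · exfalso; apply hiK; apply Fin.ext; simp [hKdef]; omega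
      exact h1 ((contains321_iff w).2 ⟨i, K, K1, hiKlt, hKK1, hdesc, hwKi⟩)
    · -- i ≠ K, j ≠ K1
      rw [if_neg hiK, if_neg hiK1, if_neg hjK, if_neg hjK1]
      have hik : (i : ℕ) < k := by
        rcases Nat.lt_or_ge (i:ℕ) k with h | h
        · exact h
        · exfalso; apply hiK; apply Fin.ext; simp [hKdef]; omega
      have hjk : k + 1 < (j : ℕ) := by
        rcases Nat.lt_or_ge (k+1) (j:ℕ) with h | h
        · exact h
        · exfalso; apply hjK1; apply Fin.ext; simp [hK1def]; omega
      have hiKlt : i < K := by rw [Fin.lt_def]; simpa [hKdef]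
      have hK1j : K1 < j := by rw [Fin.lt_def]; simpa [hK1def]
      by_contra hcon
      have hij : i ≠ j := fun h => by rw [h] at hik; omega
      have hji : w j < w i := lt_of_le_of_ne (not_lt.1 hcon) (hne j i (Ne.symm hij))
      rcases (hne i K hiK).lt_or_gt with hiw | hiw
      · -- w i < w K
        rcases (hne j K1 hjK1).lt_or_gt with hjw | hjw
        · exact h1 ((contains321_iff w).2 ⟨K, K1, j, hKK1, hK1j, hjw, hdesc⟩)
        · exact h2 ((contains3412_iff w).2 ⟨i, K, K1, j, hiKlt, hKK1, hK1j, hjw, hji, hiw⟩)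
      · exact h1 ((contains321_iff w).2 ⟨i, K, K1, hiKlt, hKK1, hdesc, hiw⟩)
  refine ⟨part1, ?_, ?_⟩
  · rw [contains321_iff]
    rintro ⟨a, b, c, hab, hbc, g1, g2⟩
    have hcross : ¬ ((a : ℕ) ≤ k ∧ k < (c : ℕ)) := by
      rintro ⟨x, y⟩
      exact absurd (part1 a c x y) (not_lt.2 (g1.trans g2).le)
    have hab' := Fin.lt_def.1 hab
    have hbc' := Fin.lt_def.1 hbc
    rcases (by omega : (c : ℕ) ≤ k ∨ k < (a : ℕ)) with hcase | hcase
    · -- all positions ≤ k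
      have haK : a ≠ K := fun h => absurd (congrArg Fin.val h) (by simp [hKdef]; omega)
      have hbK : b ≠ K := fun h => absurd (congrArg Fin.val h) (by simp [hKdef]; omega)
      have haK1 : a ≠ K1 := fun h => absurd (congrArg Fin.val h) (by simp [hK1def]; omega)
      have hbK1 : b ≠ K1 := fun h => absurd (congrArg Fin.val h) (by simp [hK1def]; omega)
      rw [happ, happ, if_neg haK, if_neg haK1, if_neg hbK, if_neg hbK1] at g2
      rw [happ, happ, if_neg hbK, if_neg hbK1] at g1
      by_cases hcK : c = K
      · rw [if_pos hcK] at g1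
        have hbK1' : b < K1 := by rw [Fin.lt_def]; simp [hK1def]; omega
        exact h1 ((contains321_iff w).2 ⟨a, b, K1, hab, hbK1', g1, g2⟩)
      · have hcK1 : c ≠ K1 := fun h => absurd (congrArg Fin.val h) (by simp [hK1def]; omega)
        rw [if_neg hcK, if_neg hcK1] at g1
        exact h1 ((contains321_iff w).2 ⟨a, b, c, hab, hbc, g1, g2⟩)
    · -- all positions > k
      have hbK : b ≠ K := fun h => absurd (congrArg Fin.val h) (by simp [hKdef]; omega)
      have hcK : c ≠ K := fun h => absurd (congrArg Fin.val h) (by simp [hKdef]; omega)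
      have hbK1 : b ≠ K1 := fun h => by rw [h] at hab'; simp [hK1def] at hab'; omega
      have hcK1 : c ≠ K1 := fun h => by rw [h] at hbc'; simp [hK1def] at hbc'; omega
      rw [happ, happ, if_neg hbK, if_neg hbK1, if_neg hcK, if_neg hcK1] at g1
      rw [happ, happ, if_neg hbK, if_neg hbK1] at g2
      by_cases haK1 : a = K1
      · rw [if_neg (by rw [haK1]; exact Ne.symm (Fin.ne_of_lt hKK1)), if_pos haK1] at g2
        have hKb : K < b := by
          rw [Fin.lt_def]; rw [haK1] at hab'; simp [hK1def] at hab'; simp [hKdef]; omega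
        exact h1 ((contains321_iff w).2 ⟨K, b, c, hKb, hbc, g1, g2⟩)
      · have haK : a ≠ K := fun h => absurd (congrArg Fin.val h) (by simp [hKdef]; omega)
        rw [if_neg haK, if_neg haK1] at g2
        exact h1 ((contains321_iff w).2 ⟨a, b, c, hab, hbc, g1, g2⟩)
  · rw [contains3412_iff]
    rintro ⟨a, b, c, d, hab, hbc, hcd, g1, g2, g3⟩
    have hcross : ¬ ((a : ℕ) ≤ k ∧ k < (d : ℕ)) := by
      rintro ⟨x, y⟩
      exact absurd (part1 a d x y) (not_lt.2 g2.le)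
    have hab' := Fin.lt_def.1 hab
    have hbc' := Fin.lt_def.1 hbc
    have hcd' := Fin.lt_def.1 hcd
    rcases (by omega : (d : ℕ) ≤ k ∨ k < (a : ℕ)) with hcase | hcase
    · have haK : a ≠ K := fun h => absurd (congrArg Fin.val h) (by simp [hKdef]; omega)
      have hbK : b ≠ K := fun h => absurd (congrArg Fin.val h) (by simp [hKdef]; omega)
      have hcK : c ≠ K := fun h => absurd (congrArg Fin.val h) (by simp [hKdef]; omega)
      have haK1 : a ≠ K1 := fun h => absurd (congrArg Fin.val h) (by simp [hK1def]; omega)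
      have hbK1 : b ≠ K1 := fun h => absurd (congrArg Fin.val h) (by simp [hK1def]; omega)
      have hcK1 : c ≠ K1 := fun h => absurd (congrArg Fin.val h) (by simp [hK1def]; omega)
      simp only [happ] at g1 g2 g3
      rw [if_neg haK, if_neg haK1, if_neg hbK, if_neg hbK1] at g3
      rw [if_neg hcK, if_neg hcK1] at g1
      rw [if_neg haK, if_neg haK1] at g2
      by_cases hdK : d = K
      · rw [if_pos hdK] at g1 g2
        have hcK1' : c < K1 := by rw [Fin.lt_def]; simp [hK1def]; omega
        exact h2 ((contains3412_iff w).2 ⟨a, b, c, K1, hab, hbc, hcK1', g1, g2, g3⟩)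
      · have hdK1 : d ≠ K1 := fun h => absurd (congrArg Fin.val h) (by simp [hK1def]; omega)
        rw [if_neg hdK, if_neg hdK1] at g1 g2
        exact h2 ((contains3412_iff w).2 ⟨a, b, c, d, hab, hbc, hcd, g1, g2, g3⟩)
    · have hbK : b ≠ K := fun h => absurd (congrArg Fin.val h) (by simp [hKdef]; omega)
      have hcK : c ≠ K := fun h => absurd (congrArg Fin.val h) (by simp [hKdef]; omega)
      have hdK : d ≠ K := fun h => absurd (congrArg Fin.val h) (by simp [hKdef]; omega)
      have hbK1 : b ≠ K1 := fun h => by rw [h] at hab'; simp [hK1def] at hab'; omega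
      have hcK1 : c ≠ K1 := fun h => by rw [h] at hbc'; simp [hK1def] at hbc'; omega
      have hdK1 : d ≠ K1 := fun h => by rw [h] at hcd'; simp [hK1def] at hcd'; omega
      simp only [happ] at g1 g2 g3
      rw [if_neg hcK, if_neg hcK1, if_neg hdK, if_neg hdK1] at g1
      rw [if_neg hbK, if_neg hbK1] at g3
      rw [if_neg hdK, if_neg hdK1] at g2
      by_cases haK1 : a = K1
      · rw [if_neg (show a ≠ K by rw [haK1]; exact Ne.symm (Fin.ne_of_lt hKK1)), if_pos haK1] at g2 g3
        have hKb : K < b := by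
          rw [Fin.lt_def]; rw [haK1] at hab'; simp [hK1def] at hab'; simp [hKdef]; omega
        exact h2 ((contains3412_iff w).2 ⟨K, b, c, d, hKb, hbc, hcd, g1, g2, g3⟩)
      · have haK : a ≠ K := fun h => absurd (congrArg Fin.val h) (by simp [hKdef]; omega)
        rw [if_neg haK, if_neg haK1] at g2 g3
        exact h2 ((contains3412_iff w).2 ⟨a, b, c, d, hab, hbc, hcd, g1, g2, g3⟩)
end
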